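/- arXiv:math/0702103 — 5 statements merged into one kernel-verified Lean document; each statement's English description precedes it below -/
import Mathlib

section
/- Let U be an almost periodic unitary on a Hilbert space H (i.e., H is generated by eigenvectors of U), let k ≥ 1, let α : {1,…,2k} → {1,…,k} be a pair partition, and let A₁,…,A_{2k−1} ∈ B(H) be arbitrary bounded operators. Then the entangled Cesàro means (1/N^k)·∑_{n₁,…,n_k=0}^{N−1} U^{n_{α(1)}} A₁ U^{n_{α(2)}} ⋯ U^{n_{α(2k−1)}} A_{2k−1} U^{n_{α(2k)}} converge in the strong operator topology as N → ∞. -/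
open Filter Finset
open scoped InnerProductSpace

set_option linter.unusedSectionVars false
set_option linter.unusedVariables false
set_option maxHeartbeats 1000000

section EntangledAux

variable {H : Type*} [NormedAddCommGroup H] [InnerProductSpace ℂ H] [CompleteSpace H]

lemma cesaro_scalar {c : ℂ} (hc : ‖c‖ = 1) :
    ∃ l : ℂ, Tendsto (fun N : ℕ => (N : ℂ)⁻¹ * ∑ t ∈ range N, c ^ t) atTop (nhds l) := by
  by_cases h1 : c = 1
  · refine ⟨1, ?_⟩
    have : ∀ᶠ N : ℕ in atTop, (N : ℂ)⁻¹ * ∑ t ∈ range N, c ^ t = 1 := by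
      filter_upwards [eventually_ge_atTop 1] with N hN
      have hN' : (N : ℂ) ≠ 0 := Nat.cast_ne_zero.mpr (by omega)
      simp [h1, inv_mul_cancel₀ hN']
    exact Tendsto.congr' (this.mono fun N h => h.symm) tendsto_const_nhds
  · refine ⟨0, ?_⟩
    have hbound : ∀ N : ℕ, ‖(N : ℂ)⁻¹ * ∑ t ∈ range N, c ^ t‖ ≤ (N : ℝ)⁻¹ * (2 / ‖1 - c‖) := by
      intro N
      rw [norm_mul, norm_inv, Complex.norm_natCast]
      gcongr
      rw [geom_sum_eq h1]
      rw [norm_div]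
      have h1c : ‖1 - c‖ ≠ 0 := by
        simp only [ne_eq, norm_eq_zero, sub_eq_zero]
        exact fun h => h1 h.symm
      rw [div_le_div_iff₀ (lt_of_le_of_ne (norm_nonneg _) (Ne.symm ?_)) (lt_of_le_of_ne (norm_nonneg _) (Ne.symm h1c))]
      · calc ‖c ^ N - 1‖ * ‖1 - c‖ ≤ (‖c ^ N‖ + ‖(1:ℂ)‖) * ‖1 - c‖ := by
              gcongr; exact norm_sub_le _ _
          _ = 2 * ‖1 - c‖ := by rw [norm_pow, hc]; norm_num
          _ = 2 * ‖c - 1‖ := by rw [norm_sub_rev]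
      · rw [norm_sub_rev] at h1c; exact h1c
    have h2 : Tendsto (fun N : ℕ => (N : ℝ)⁻¹ * (2 / ‖1 - c‖)) atTop (nhds 0) := by
      simpa using ((tendsto_inv_atTop_nhds_zero_nat (𝕜 := ℝ)).mul_const (2 / ‖1 - c‖))
    refine squeeze_zero_norm (fun N => hbound N) h2

noncomputable def entOp (V : H →L[ℂ] H) {m k : ℕ} (β : Fin m → Fin k)
    (A : Fin m → H →L[ℂ] H) (n : Fin k → ℕ) : H →L[ℂ] H :=
  (List.ofFn fun i : Fin m => A i * V ^ (n (β i))).prod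

noncomputable def entAvg (V : H →L[ℂ] H) {m k : ℕ} (β : Fin m → Fin k)
    (A : Fin m → H →L[ℂ] H) (μ : Fin k → ℂ) (N : ℕ) : H →L[ℂ] H :=
  ((N : ℂ) ^ k)⁻¹ • ∑ n ∈ Fintype.piFinset (fun _ : Fin k => range N),
    (∏ j, μ j ^ (n j)) • entOp V β A n

lemma norm_list_prod_le : ∀ l : List (H →L[ℂ] H), ‖l.prod‖ ≤ (l.map norm).prod
  | [] => by simp only [List.prod_nil, List.map_nil]; exact ContinuousLinearMap.norm_id_le
  | (a :: l) => by
    simp only [List.prod_cons, List.map_cons]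
    calc ‖a * l.prod‖ ≤ ‖a‖ * ‖l.prod‖ := norm_mul_le _ _
      _ ≤ ‖a‖ * (l.map norm).prod :=
          mul_le_mul_of_nonneg_left (norm_list_prod_le l) (norm_nonneg a)

lemma pow_isometry {V : H →L[ℂ] H} (hiso : ∀ x, ‖V x‖ = ‖x‖) (t : ℕ) :
    ∀ x : H, ‖(V ^ t) x‖ = ‖x‖ := by
  induction t with
  | zero => simp
  | succ t ih =>
    intro x
    rw [pow_succ, ContinuousLinearMap.mul_apply, ih, hiso]

lemma norm_entOp_le {V : H →L[ℂ] H} (hiso : ∀ x, ‖V x‖ = ‖x‖) {m k : ℕ}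
    (β : Fin m → Fin k) (A : Fin m → H →L[ℂ] H) (n : Fin k → ℕ) :
    ‖entOp V β A n‖ ≤ ∏ i, ‖A i‖ := by
  refine le_trans (norm_list_prod_le _) ?_
  rw [List.map_ofFn, List.prod_ofFn]
  refine Finset.prod_le_prod (fun i _ => norm_nonneg _) (fun i _ => ?_)
  calc ‖(A i * V ^ (n (β i)) : H →L[ℂ] H)‖ ≤ ‖A i‖ * ‖(V ^ (n (β i)) : H →L[ℂ] H)‖ :=
        norm_mul_le _ _
    _ ≤ ‖A i‖ * 1 :=
        mul_le_mul_of_nonneg_left (ContinuousLinearMap.opNorm_le_bound _ zero_le_one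
            (fun x => by rw [pow_isometry hiso _ x]; simp)) (norm_nonneg _)
    _ = ‖A i‖ := mul_one _

lemma norm_entAvg_le {V : H →L[ℂ] H} (hiso : ∀ x, ‖V x‖ = ‖x‖) {m k : ℕ} (hk : 1 ≤ k)
    (β : Fin m → Fin k) (A : Fin m → H →L[ℂ] H) {μ : Fin k → ℂ} (hμ : ∀ j, ‖μ j‖ = 1)
    (N : ℕ) : ‖entAvg V β A μ N‖ ≤ ∏ i, ‖A i‖ := by
  have hC : (0:ℝ) ≤ ∏ i, ‖A i‖ := Finset.prod_nonneg fun i _ => norm_nonneg _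
  rcases Nat.eq_zero_or_pos N with rfl | hN
  · simp only [entAvg]
    rw [Nat.cast_zero, zero_pow (by omega), inv_zero, zero_smul, norm_zero]
    exact hC
  rw [entAvg, norm_smul]
  have hcard : ((Fintype.piFinset (fun _ : Fin k => range N)).card : ℝ) = (N : ℝ) ^ k := by
    simp [Fintype.card_piFinset]
  calc ‖((N : ℂ) ^ k)⁻¹‖ * ‖∑ n ∈ Fintype.piFinset (fun _ : Fin k => range N),
        (∏ j, μ j ^ (n j)) • entOp V β A n‖
      ≤ ‖((N : ℂ) ^ k)⁻¹‖ * ∑ n ∈ Fintype.piFinset (fun _ : Fin k => range N), (∏ i, ‖A i‖) := by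
        gcongr
        refine le_trans (norm_sum_le _ _) (Finset.sum_le_sum fun n _ => ?_)
        rw [norm_smul]
        have : ‖∏ j, μ j ^ (n j)‖ = 1 := by
          rw [norm_prod]
          exact Finset.prod_eq_one fun j _ => by rw [norm_pow, hμ j, one_pow]
        rw [this, one_mul]
        exact norm_entOp_le hiso β A n
    _ = ((N:ℝ)^k)⁻¹ * (((N:ℝ))^k * (∏ i, ‖A i‖)) := by
        rw [Finset.sum_const, nsmul_eq_mul, hcard]
        simp [norm_inv, norm_pow]
    _ ≤ ∏ i, ‖A i‖ := by
        rw [← mul_assoc, inv_mul_cancel₀ (by positivity), one_mul]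
lemma dense_convergence (T : ℕ → H →L[ℂ] H) (C : ℝ) (hC : ∀ N, ‖T N‖ ≤ C)
    (s : Set H) (hs : (Submodule.span ℂ s).topologicalClosure = ⊤)
    (h : ∀ y ∈ s, ∃ L, Tendsto (fun N => T N y) atTop (nhds L)) :
    ∀ y : H, ∃ L, Tendsto (fun N => T N y) atTop (nhds L) := by
  have hC0 : 0 ≤ C := le_trans (norm_nonneg _) (hC 0)
  set p : Submodule ℂ H :=
    { carrier := {y : H | ∃ L, Tendsto (fun N => T N y) atTop (nhds L)}
      add_mem' := by
        rintro a b ⟨La, ha⟩ ⟨Lb, hb⟩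
        exact ⟨La + Lb, by simpa only [map_add] using ha.add hb⟩
      zero_mem' := ⟨0, by simpa only [map_zero] using tendsto_const_nhds⟩
      smul_mem' := by
        rintro c a ⟨La, ha⟩
        exact ⟨c • La, by simpa only [map_smul] using ha.const_smul c⟩ } with hp
  have hclosed : IsClosed (p : Set H) := by
    rw [← isSeqClosed_iff_isClosed]
    intro u y hu huy
    refine cauchySeq_tendsto_of_complete ?_
    rw [Metric.cauchySeq_iff]
    intro ε hε
    -- pick an approximant
    obtain ⟨i, hi⟩ : ∃ i, ‖y - u i‖ < ε / (4 * (C + 1)) := by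
      have := Metric.tendsto_atTop.mp huy (ε / (4 * (C + 1))) (by positivity)
      obtain ⟨i, hi⟩ := this
      exact ⟨i, by simpa [dist_eq_norm, norm_sub_rev] using hi i le_rfl⟩
    obtain ⟨L, hL⟩ := hu i
    obtain ⟨M, hM⟩ := Metric.cauchySeq_iff.mp hL.cauchySeq (ε / 2) (by positivity)
    refine ⟨M, fun a ha b hb => ?_⟩
    have key : ∀ N, ‖T N y - T N (u i)‖ ≤ ε / 4 := by
      intro N
      calc ‖T N y - T N (u i)‖ = ‖T N (y - u i)‖ := by rw [map_sub]
        _ ≤ ‖T N‖ * ‖y - u i‖ := (T N).le_opNorm _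
        _ ≤ C * (ε / (4 * (C + 1))) := by
            apply mul_le_mul (hC N) hi.le (norm_nonneg _) hC0
        _ ≤ ε / 4 := by
            rw [mul_div_assoc']
            rw [div_le_div_iff₀ (by positivity) (by norm_num)]
            nlinarith [hε.le, hC0]
    calc dist (T a y) (T b y)
        ≤ dist (T a y) (T a (u i)) + dist (T a (u i)) (T b (u i)) + dist (T b (u i)) (T b y) :=
          dist_triangle4 _ _ _ _
      _ < ε / 4 + ε / 2 + ε / 4 := by
          have k1 : dist ((T a) y) ((T a) (u i)) ≤ ε / 4 := by
            simpa [dist_eq_norm] using key a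
          have k2 : dist ((T b) (u i)) ((T b) y) ≤ ε / 4 := by
            simpa [dist_eq_norm, norm_sub_rev] using key b
          have k3 := hM a ha b hb
          linarith
      _ = ε := by ring
  have hsub : Submodule.span ℂ s ≤ p := Submodule.span_le.mpr fun y hy => h y hy
  have : (⊤ : Submodule ℂ H) ≤ p := by
    rw [← hs]
    exact Submodule.topologicalClosure_minimal _ hsub hclosed
  exact fun y => this trivial
lemma eig_pow {V : H →L[ℂ] H} {y : H} {z : ℂ} (hz : V y = z • y) (t : ℕ) :
    (V ^ t) y = z ^ t • y := by
  induction t with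
  | zero => simp
  | succ t ih =>
    rw [pow_succ, ContinuousLinearMap.mul_apply, hz, map_smul, ih, smul_smul, pow_succ]
    ring_nf

lemma entOp_split_last (V : H →L[ℂ] H) {m k : ℕ} (β : Fin (m + 1) → Fin k)
    (A : Fin (m + 1) → H →L[ℂ] H) (n : Fin k → ℕ) :
    entOp V β A n =
      entOp V (β ∘ Fin.castSucc) (A ∘ Fin.castSucc) n *
        (A (Fin.last m) * V ^ (n (β (Fin.last m)))) := by
  unfold entOp
  rw [List.ofFn_succ']
  rw [List.concat_eq_append, List.prod_append, List.prod_singleton]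
  rfl

-- scalar identity for the updated weight
lemma update_weight_prod {k : ℕ} (μ : Fin k → ℂ) (j₀ : Fin k) (z : ℂ) (n : Fin k → ℕ) :
    (∏ j, (Function.update μ j₀ (z * μ j₀)) j ^ (n j)) =
      z ^ (n j₀) * ∏ j, μ j ^ (n j) := by
  rw [Finset.prod_eq_mul_prod_sdiff_singleton_of_mem (Finset.mem_univ j₀)
      (fun j => (Function.update μ j₀ (z * μ j₀)) j ^ (n j)),
    Finset.prod_eq_mul_prod_sdiff_singleton_of_mem (Finset.mem_univ j₀) (fun j => μ j ^ (n j))]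
  rw [Function.update_self, mul_pow]
  rw [Finset.prod_congr rfl (fun j hj => by
    rw [Function.update_of_ne (by simpa using (Finset.mem_sdiff.mp hj).2)])]
  ring
lemma key (V : H →L[ℂ] H) (hiso : ∀ x, ‖V x‖ = ‖x‖)
    (hdense : (Submodule.span ℂ {x : H | ∃ z : ℂ, V x = z • x}).topologicalClosure = ⊤) :
    ∀ (m : ℕ), ∀ {k : ℕ}, 1 ≤ k → ∀ (β : Fin m → Fin k) (A : Fin m → H →L[ℂ] H)
      (μ : Fin k → ℂ), (∀ j, ‖μ j‖ = 1) → ∀ y : H,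
      ∃ L, Tendsto (fun N => entAvg V β A μ N y) atTop (nhds L) := by
  intro m
  induction m with
  | zero =>
    intro k hk β A μ hμ y
    choose l hl using fun j => cesaro_scalar (hμ j)
    refine ⟨(∏ j, l j) • y, ?_⟩
    have heq : ∀ N : ℕ, entAvg V β A μ N y =
        (∏ j : Fin k, ((N : ℂ)⁻¹ * ∑ t ∈ range N, μ j ^ t)) • y := by
      intro N
      unfold entAvg entOp
      simp only [List.ofFn_zero, List.prod_nil, smul_eq_mul, mul_one]
      rw [← Finset.sum_smul, ← Finset.prod_univ_sum]
      rw [ContinuousLinearMap.smul_apply, ContinuousLinearMap.smul_apply,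
        ContinuousLinearMap.one_apply, smul_smul, Finset.prod_mul_distrib]
      congr 1
      rw [Finset.prod_const]
      simp [Finset.card_univ, inv_pow]
    rw [show (fun N => entAvg V β A μ N y) = _ from funext heq]
    exact (tendsto_finset_prod univ (fun j _ => hl j)).smul_const y
  | succ m ih =>
    intro k hk β A μ hμ
    refine dense_convergence (entAvg V β A μ) (∏ i, ‖A i‖)
      (norm_entAvg_le hiso hk β A hμ) _ hdense ?_
    rintro y ⟨z, hz⟩
    by_cases hy0 : y = 0
    · refine ⟨0, ?_⟩
      subst hy0
      simp only [map_zero]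
      exact tendsto_const_nhds
    have hz1 : ‖z‖ = 1 := by
      have h1 : ‖V y‖ = ‖y‖ := hiso y
      rw [hz, norm_smul] at h1
      have hy0' : ‖y‖ ≠ 0 := norm_ne_zero_iff.mpr hy0
      field_simp at h1
      exact h1
    set j₀ := β (Fin.last m) with hj₀
    set μ' := Function.update μ j₀ (z * μ j₀) with hμ'def
    have hμ' : ∀ j, ‖μ' j‖ = 1 := by
      intro j
      rcases eq_or_ne j j₀ with rfl | hne
      · rw [hμ'def, Function.update_self, norm_mul, hz1, hμ, one_mul]
      · rw [hμ'def, Function.update_of_ne hne, hμ]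
    obtain ⟨L, hL⟩ := ih hk (β ∘ Fin.castSucc) (A ∘ Fin.castSucc) μ' hμ' ((A (Fin.last m)) y)
    refine ⟨L, hL.congr ?_⟩
    intro N
    unfold entAvg
    rw [ContinuousLinearMap.smul_apply, ContinuousLinearMap.smul_apply]
    congr 1
    rw [ContinuousLinearMap.sum_apply, ContinuousLinearMap.sum_apply]
    refine Finset.sum_congr rfl fun n _ => ?_
    rw [ContinuousLinearMap.smul_apply, ContinuousLinearMap.smul_apply]
    rw [entOp_split_last V β A n]
    rw [ContinuousLinearMap.mul_apply, ContinuousLinearMap.mul_apply]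
    rw [eig_pow hz, map_smul, map_smul, smul_smul]
    congr 1
    rw [hμ'def, update_weight_prod]
    ring
lemma prod_ofFn_eq_head_mul {M : Type*} [Monoid M] {a b : ℕ} (h : a = b + 1) (f : Fin a → M) :
    (List.ofFn f).prod =
      f (Fin.cast h.symm 0) * (List.ofFn fun i : Fin b => f (Fin.cast h.symm i.succ)).prod := by
  subst h
  simp [List.ofFn_succ, Fin.cast_refl]


end EntangledAux

/-- Entangled ergodic theorem in the almost periodic case: if the unitary `U` is almost periodic
(the eigenvectors of `U` generate `H`), `α` is a pair partition of `{1,…,2k}` and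
`A₁, …, A_{2k-1}` are arbitrary bounded operators, then the entangled Cesàro means converge in
the strong operator topology. -/
theorem entangled_ergodic_theorem_almost_periodic
    {H : Type*} [NormedAddCommGroup H] [InnerProductSpace ℂ H] [CompleteSpace H]
    (U : unitary (H →L[ℂ] H))
    (hap : (Submodule.span ℂ {x : H | ∃ z : ℂ, (U : H →L[ℂ] H) x = z • x}).topologicalClosure = ⊤)
    (k : ℕ) (hk : 1 ≤ k)
    (α : Fin (2 * k) → Fin k)
    (hpair : ∀ j : Fin k, (Finset.univ.filter (fun p : Fin (2 * k) => α p = j)).card = 2)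
    (A : Fin (2 * k - 1) → (H →L[ℂ] H)) :
    ∃ S : H →L[ℂ] H, ∀ x : H,
      Tendsto
        (fun N : ℕ =>
          (((N : ℂ) ^ k)⁻¹ •
            ∑ n ∈ Fintype.piFinset (fun _ : Fin k => Finset.range N),
              ((U ^ (n (α ⟨0, by omega⟩)) : unitary (H →L[ℂ] H)) : H →L[ℂ] H) *
                (List.ofFn fun i : Fin (2 * k - 1) =>
                  A i *
                    ((U ^ (n (α (Fin.cast (by omega) i.succ))) : unitary (H →L[ℂ] H)) :
                      H →L[ℂ] H)).prod) x)
        atTop (nhds (S x)) := by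
  classical
  set V : H →L[ℂ] H := (U : H →L[ℂ] H) with hVdef
  have hiso : ∀ x, ‖V x‖ = ‖x‖ := fun x => V.norm_map_of_mem_unitary U.property x
  have h2k : 2 * k = (2 * k - 1) + 1 := by omega
  set A' : Fin (2 * k) → (H →L[ℂ] H) := fun i =>
    if h : (i : ℕ) = 0 then 1 else A ⟨(i : ℕ) - 1, by omega⟩ with hA'def
  have hμ1 : ∀ j : Fin k, ‖(fun _ : Fin k => (1:ℂ)) j‖ = 1 := fun j => by simp
  have hconv := key V hiso hap (2 * k) hk α A' (fun _ => (1:ℂ)) hμ1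
  have heq : ∀ (N : ℕ), entAvg V α A' (fun _ => (1:ℂ)) N =
      ((N : ℂ) ^ k)⁻¹ •
        ∑ n ∈ Fintype.piFinset (fun _ : Fin k => Finset.range N),
          ((U ^ (n (α ⟨0, by omega⟩)) : unitary (H →L[ℂ] H)) : H →L[ℂ] H) *
            (List.ofFn fun i : Fin (2 * k - 1) =>
              A i *
                ((U ^ (n (α (Fin.cast (by omega) i.succ))) : unitary (H →L[ℂ] H)) :
                  H →L[ℂ] H)).prod := by
    intro N
    unfold entAvg
    congr 1
    refine Finset.sum_congr rfl fun n _ => ?_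
    rw [show (∏ j : Fin k, (1:ℂ) ^ (n j)) = 1 by simp, one_smul]
    unfold entOp
    rw [prod_ofFn_eq_head_mul h2k]
    congr 1
  -- uniform bound
  have hbound : ∀ N, ‖entAvg V α A' (fun _ : Fin k => (1:ℂ)) N‖ ≤ ∏ i, ‖A' i‖ :=
    norm_entAvg_le hiso hk α A' hμ1
  choose g hg using hconv
  have hadd : ∀ x y : H, g (x + y) = g x + g y := by
    intro x y
    refine tendsto_nhds_unique ?_ ((hg x).add (hg y))
    have : (fun N => entAvg V α A' (fun _ : Fin k => (1:ℂ)) N (x + y)) =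
        fun N => entAvg V α A' (fun _ : Fin k => (1:ℂ)) N x +
          entAvg V α A' (fun _ : Fin k => (1:ℂ)) N y := funext fun N => map_add _ _ _
    rw [← this]
    exact hg (x + y)
  have hsmul : ∀ (c : ℂ) (x : H), g (c • x) = c • g x := by
    intro c x
    refine tendsto_nhds_unique ?_ ((hg x).const_smul c)
    have : (fun N => entAvg V α A' (fun _ : Fin k => (1:ℂ)) N (c • x)) =
        fun N => c • entAvg V α A' (fun _ : Fin k => (1:ℂ)) N x := funext fun N => map_smul _ _ _
    rw [← this]
    exact hg (c • x)
  let Slin : H →ₗ[ℂ] H :=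
    { toFun := g, map_add' := hadd, map_smul' := hsmul }
  have hgb : ∀ x, ‖g x‖ ≤ (∏ i, ‖A' i‖) * ‖x‖ := by
    intro x
    refine le_of_tendsto (hg x).norm (Eventually.of_forall fun N => ?_)
    calc ‖entAvg V α A' (fun _ : Fin k => (1:ℂ)) N x‖
        ≤ ‖entAvg V α A' (fun _ : Fin k => (1:ℂ)) N‖ * ‖x‖ := ContinuousLinearMap.le_opNorm _ _
      _ ≤ (∏ i, ‖A' i‖) * ‖x‖ := mul_le_mul_of_nonneg_right (hbound N) (norm_nonneg x)
  refine ⟨Slin.mkContinuous (∏ i, ‖A' i‖) hgb, fun x => ?_⟩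
  have : Slin.mkContinuous (∏ i, ‖A' i‖) hgb x = g x := rfl
  rw [this]
  refine (hg x).congr fun N => ?_
  rw [heq N]
end

section
/- A unitary operator U on a Hilbert space H is almost periodic (every vector has relatively norm-compact orbit under {Uⁿ}) if and only if H is the closed linear span of the eigenvectors of U. -/
open Filter Pointwise
open scoped InnerProductSpace Topology

set_option maxHeartbeats 1600000
set_option synthInstance.maxHeartbeats 400000
set_option linter.unusedSectionVars false

namespace APAux

variable {H : Type*} [NormedAddCommGroup H] [InnerProductSpace ℂ H] [CompleteSpace H]

lemma unitary_inner (W : unitary (H →L[ℂ] H)) (y z : H) :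
    ⟪(W : H →L[ℂ] H) y, (W : H →L[ℂ] H) z⟫_ℂ = ⟪y, z⟫_ℂ := by
  have h1 : star (W : H →L[ℂ] H) * (W : H →L[ℂ] H) = 1 := (Unitary.mem_iff.mp W.2).1
  rw [ContinuousLinearMap.star_eq_adjoint] at h1
  calc ⟪(W : H →L[ℂ] H) y, (W : H →L[ℂ] H) z⟫_ℂ
      = ⟪(ContinuousLinearMap.adjoint (W : H →L[ℂ] H)) ((W : H →L[ℂ] H) y), z⟫_ℂ := by
        rw [ContinuousLinearMap.adjoint_inner_left]
    _ = ⟪y, z⟫_ℂ := by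
        rw [← ContinuousLinearMap.mul_apply, h1, ContinuousLinearMap.one_apply]

lemma unitary_norm (W : unitary (H →L[ℂ] H)) (y : H) :
    ‖(W : H →L[ℂ] H) y‖ = ‖y‖ := by
  have h := congrArg Complex.re (unitary_inner W y y)
  have h2 : ‖(W : H →L[ℂ] H) y‖ ^ 2 = ‖y‖ ^ 2 := by
    rw [← inner_self_eq_norm_sq (𝕜 := ℂ), ← inner_self_eq_norm_sq (𝕜 := ℂ)]
    exact h
  have := congrArg Real.sqrt h2
  rwa [Real.sqrt_sq (norm_nonneg _), Real.sqrt_sq (norm_nonneg _)] at this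

lemma unitary_dist (W : unitary (H →L[ℂ] H)) (y z : H) :
    ‖(W : H →L[ℂ] H) y - (W : H →L[ℂ] H) z‖ = ‖y - z‖ := by
  rw [← map_sub]; exact unitary_norm W _

lemma unitary_coe_pow (U : unitary (H →L[ℂ] H)) (n : ℕ) :
    ((U ^ n : unitary (H →L[ℂ] H)) : H →L[ℂ] H) = (U : H →L[ℂ] H) ^ n := by
  exact SubmonoidClass.coe_pow U n


/-- The orbit of `x` under integer powers of `U`. -/
def orb (U : unitary (H →L[ℂ] H)) (x : H) : Set H :=
  {y : H | ∃ n : ℤ, y = ((U ^ n : unitary (H →L[ℂ] H)) : H →L[ℂ] H) x}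

lemma orb_totallyBounded_of_close {U : unitary (H →L[ℂ] H)} {x : H}
    (h : ∀ ε : ℝ, 0 < ε → ∃ y : H, ‖x - y‖ < ε ∧ TotallyBounded (orb U y)) :
    TotallyBounded (orb U x) := by
  rw [Metric.totallyBounded_iff]
  intro ε hε
  obtain ⟨y, hxy, hy⟩ := h (ε / 2) (by linarith)
  obtain ⟨t, ht, hcov⟩ := Metric.totallyBounded_iff.1 hy (ε / 2) (by linarith)
  refine ⟨t, ht, ?_⟩
  rintro w ⟨n, rfl⟩
  have hyn : ((U ^ n : unitary (H →L[ℂ] H)) : H →L[ℂ] H) y ∈ orb U y := ⟨n, rfl⟩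
  obtain ⟨z, hz, hball⟩ := Set.mem_iUnion₂.1 (hcov hyn)
  refine Set.mem_iUnion₂.2 ⟨z, hz, ?_⟩
  have hd : dist (((U ^ n : unitary (H →L[ℂ] H)) : H →L[ℂ] H) x)
      (((U ^ n : unitary (H →L[ℂ] H)) : H →L[ℂ] H) y) < ε / 2 := by
    rw [dist_eq_norm, unitary_dist (U ^ n) x y, ← dist_eq_norm]
    rw [dist_eq_norm]; exact hxy
  calc dist (((U ^ n : unitary (H →L[ℂ] H)) : H →L[ℂ] H) x) z
      ≤ _ + _ := dist_triangle _ (((U ^ n : unitary (H →L[ℂ] H)) : H →L[ℂ] H) y) z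
    _ < ε / 2 + ε / 2 := add_lt_add hd (Metric.mem_ball.1 hball)
    _ = ε := by ring

/-- The set of vectors with relatively compact orbit forms a submodule. -/
def apSub (U : unitary (H →L[ℂ] H)) : Submodule ℂ H where
  carrier := {x : H | IsCompact (closure (orb U x))}
  zero_mem' := by
    have horb : orb U (0 : H) = {0} := by
      ext y
      constructor
      · rintro ⟨n, rfl⟩
        simp only [Set.mem_singleton_iff, map_zero]
      · rintro rfl
        exact ⟨0, (map_zero _).symm⟩
    show IsCompact (closure (orb U (0 : H)))
    rw [horb, closure_singleton]
    exact isCompact_singleton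
  add_mem' := by
    intro a b ha hb
    show IsCompact (closure (orb U (a + b)))
    have hcomp : IsCompact (closure (orb U a) + closure (orb U b)) :=
      IsCompact.add ha hb
    have hsub : orb U (a + b) ⊆ closure (orb U a) + closure (orb U b) := by
      rintro w ⟨n, rfl⟩
      rw [map_add]
      exact Set.add_mem_add (subset_closure ⟨n, rfl⟩) (subset_closure ⟨n, rfl⟩)
    exact hcomp.of_isClosed_subset isClosed_closure (closure_minimal hsub hcomp.isClosed)
  smul_mem' := by
    intro c a ha
    show IsCompact (closure (orb U (c • a)))
    have hcomp : IsCompact ((fun v : H => c • v) '' closure (orb U a)) :=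
      IsCompact.image ha (continuous_const_smul c)
    have hsub : orb U (c • a) ⊆ (fun v : H => c • v) '' closure (orb U a) := by
      rintro w ⟨n, rfl⟩
      exact ⟨_, subset_closure ⟨n, rfl⟩, (map_smul _ c a).symm⟩
    exact hcomp.of_isClosed_subset isClosed_closure (closure_minimal hsub hcomp.isClosed)

lemma mem_apSub_iff (U : unitary (H →L[ℂ] H)) (x : H) :
    x ∈ apSub U ↔ IsCompact (closure (orb U x)) := Iff.rfl

lemma apSub_closed (U : unitary (H →L[ℂ] H)) : IsClosed ((apSub U : Set H)) := by
  refine isClosed_of_closure_subset ?_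
  intro x hx
  show IsCompact (closure (orb U x))
  rw [isCompact_iff_totallyBounded_isComplete]
  refine ⟨(orb_totallyBounded_of_close ?_).closure, isClosed_closure.isComplete⟩
  intro ε hε
  obtain ⟨y, hy, hxy⟩ := Metric.mem_closure_iff.1 hx ε hε
  have hy' : IsCompact (closure (orb U y)) := hy
  exact ⟨y, by rwa [← dist_eq_norm], hy'.totallyBounded.subset subset_closure⟩


lemma unitary_coe_mul_apply (A B : unitary (H →L[ℂ] H)) (x : H) :
    ((A * B : unitary (H →L[ℂ] H)) : H →L[ℂ] H) x
      = (A : H →L[ℂ] H) ((B : H →L[ℂ] H) x) := rfl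

lemma eigen_zpow (U : unitary (H →L[ℂ] H)) {x : H} {z : ℂ}
    (hz : (U : H →L[ℂ] H) x = z • x) (hz1 : z ≠ 0) (n : ℤ) :
    ((U ^ n : unitary (H →L[ℂ] H)) : H →L[ℂ] H) x = z ^ n • x := by
  have hnat : ∀ m : ℕ, ((U ^ m : unitary (H →L[ℂ] H)) : H →L[ℂ] H) x = z ^ m • x := by
    intro m
    induction m with
    | zero =>
      rw [pow_zero, pow_zero, one_smul]
      rfl
    | succ k ih =>
      rw [pow_succ, unitary_coe_mul_apply, hz, map_smul, ih, smul_smul, ← pow_succ']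
  rcases n with m | m
  · rw [Int.ofNat_eq_coe, zpow_natCast, zpow_natCast]
    exact hnat m
  · have hm := hnat (m + 1)
    have happ : ((((U ^ (m + 1) : unitary (H →L[ℂ] H))⁻¹ : unitary (H →L[ℂ] H)) :
        H →L[ℂ] H)) (((U ^ (m + 1) : unitary (H →L[ℂ] H)) : H →L[ℂ] H) x) = x := by
      rw [← unitary_coe_mul_apply, inv_mul_cancel]
      rfl
    rw [hm, map_smul] at happ
    have hinv : (U ^ (Int.negSucc m) : unitary (H →L[ℂ] H)) =
        ((U ^ (m + 1) : unitary (H →L[ℂ] H))⁻¹ : unitary (H →L[ℂ] H)) := by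
      rw [← zpow_natCast U (m + 1), ← zpow_neg]
      congr 1
    have hzpow : (z ^ (m + 1 : ℕ)) ≠ 0 := pow_ne_zero _ hz1
    have : (((U ^ (m + 1) : unitary (H →L[ℂ] H))⁻¹ : unitary (H →L[ℂ] H)) : H →L[ℂ] H) x
        = (z ^ (m + 1 : ℕ))⁻¹ • x := by
      rw [eq_inv_smul_iff₀ hzpow]
      exact happ
    rw [hinv, this, Int.negSucc_eq, zpow_neg, ← zpow_natCast z (m + 1)]
    norm_num


lemma eigenvector_mem_apSub (U : unitary (H →L[ℂ] H)) {x : H} {z : ℂ}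
    (hx : x ≠ 0) (hz : (U : H →L[ℂ] H) x = z • x) : x ∈ apSub U := by
  have hz1 : ‖z‖ = 1 := by
    have h1 : ‖(U : H →L[ℂ] H) x‖ = ‖x‖ := unitary_norm U x
    rw [hz, norm_smul] at h1
    have hne : ‖x‖ ≠ 0 := norm_ne_zero_iff.2 hx
    field_simp at h1
    tauto
  have hz0 : z ≠ 0 := by
    intro h0
    rw [h0, norm_zero] at hz1
    norm_num at hz1
  show IsCompact (closure (orb U x))
  have hsubset : orb U x ⊆ (fun w : ℂ => w • x) '' Metric.sphere 0 1 := by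
    rintro w ⟨n, rfl⟩
    rw [eigen_zpow U hz hz0 n]
    refine ⟨z ^ n, ?_, rfl⟩
    rw [mem_sphere_zero_iff_norm, norm_zpow, hz1, one_zpow]
  have hcomp : IsCompact ((fun w : ℂ => w • x) '' Metric.sphere 0 1) :=
    (isCompact_sphere 0 1).image (continuous_id.smul continuous_const)
  exact hcomp.of_isClosed_subset isClosed_closure (closure_minimal hsubset hcomp.isClosed)

lemma backward (U : unitary (H →L[ℂ] H))
    (hspan : (Submodule.span ℂ
        {x : H | ∃ z : ℂ, x ≠ 0 ∧ (U : H →L[ℂ] H) x = z • x}).topologicalClosure = ⊤)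
    (x : H) : IsCompact (closure (orb U x)) := by
  have hle : Submodule.span ℂ {x : H | ∃ z : ℂ, x ≠ 0 ∧ (U : H →L[ℂ] H) x = z • x}
      ≤ apSub U := by
    rw [Submodule.span_le]
    rintro e ⟨z, hez, hVe⟩
    exact eigenvector_mem_apSub U hez hVe
  have h2 := Submodule.topologicalClosure_minimal _ hle (apSub_closed U)
  rw [hspan] at h2
  exact h2 Submodule.mem_top

/-- Polarization bound: a symmetric operator with small diagonal has small norm. -/
lemma opNorm_le_of_re_inner_bound {A : H →L[ℂ] H}
    (hsym : ∀ y z : H, ⟪A y, z⟫_ℂ = ⟪y, A z⟫_ℂ) {M : ℝ} (hM : 0 ≤ M)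
    (h : ∀ y : H, ‖y‖ ≤ 1 → |(⟪A y, y⟫_ℂ).re| ≤ M) : ‖A‖ ≤ M := by
  have hquad : ∀ w : H, |(⟪A w, w⟫_ℂ).re| ≤ M * ‖w‖ ^ 2 := by
    intro w
    rcases eq_or_ne w 0 with rfl | hw
    · simp
    · have hnw : (0:ℝ) < ‖w‖ := norm_pos_iff.2 hw
      set c : ℂ := ((‖w‖⁻¹ : ℝ) : ℂ) with hc
      have h1 : ‖c • w‖ ≤ 1 := by
        rw [norm_smul, hc, Complex.norm_real, Real.norm_eq_abs,
          abs_of_nonneg (by positivity), inv_mul_cancel₀ hnw.ne']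
      have h2 := h _ h1
      have hsmul : ⟪A (c • w), c • w⟫_ℂ = (((‖w‖⁻¹ : ℝ) ^ 2 : ℝ) : ℂ) * ⟪A w, w⟫_ℂ := by
        rw [map_smul, inner_smul_left, inner_smul_right, hc]
        rw [Complex.conj_ofReal]
        push_cast
        ring
      rw [hsmul] at h2
      have h3 : |(‖w‖⁻¹ ^ 2 : ℝ) * (⟪A w, w⟫_ℂ).re| ≤ M := by
        rwa [Complex.re_ofReal_mul] at h2
      rw [abs_mul, abs_of_nonneg (by positivity : (0:ℝ) ≤ ‖w‖⁻¹ ^ 2)] at h3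
      have h5 := mul_le_mul_of_nonneg_left h3 (by positivity : (0:ℝ) ≤ ‖w‖ ^ 2)
      calc |(⟪A w, w⟫_ℂ).re| = ‖w‖ ^ 2 * (‖w‖⁻¹ ^ 2 * |(⟪A w, w⟫_ℂ).re|) := by
            field_simp
        _ ≤ ‖w‖ ^ 2 * M := h5
        _ = M * ‖w‖ ^ 2 := by ring
  have hbil : ∀ v w : H, (⟪A v, w⟫_ℂ).re ≤ M / 2 * (‖v‖ ^ 2 + ‖w‖ ^ 2) := by
    intro v w
    have hexp : ⟪A (v + w), v + w⟫_ℂ - ⟪A (v - w), v - w⟫_ℂ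
        = (⟪A v, w⟫_ℂ + ⟪A v, w⟫_ℂ) + (⟪A w, v⟫_ℂ + ⟪A w, v⟫_ℂ) := by
      rw [map_add, map_sub, inner_add_left, inner_add_right, inner_add_right,
        inner_sub_left, inner_sub_right, inner_sub_right]
      ring
    have hre : (⟪A w, v⟫_ℂ).re = (⟪A v, w⟫_ℂ).re := by
      have hcj : (⟪w, A v⟫_ℂ) = (starRingEnd ℂ) (⟪A v, w⟫_ℂ) := (inner_conj_symm w (A v)).symm
      rw [hsym w v, hcj, Complex.conj_re]
    have h4 : 4 * (⟪A v, w⟫_ℂ).re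
        = (⟪A (v + w), v + w⟫_ℂ).re - (⟪A (v - w), v - w⟫_ℂ).re := by
      have h0 := congrArg Complex.re hexp
      simp only [Complex.sub_re, Complex.add_re] at h0
      rw [hre] at h0
      linarith
    have h5 : (⟪A (v + w), v + w⟫_ℂ).re - (⟪A (v - w), v - w⟫_ℂ).re
        ≤ M * ‖v + w‖ ^ 2 + M * ‖v - w‖ ^ 2 := by
      have a1 := (abs_le.1 (hquad (v + w))).2
      have a2 := (abs_le.1 (hquad (v - w))).1
      linarith
    have h6 : ‖v + w‖ * ‖v + w‖ + ‖v - w‖ * ‖v - w‖ = 2 * (‖v‖ * ‖v‖ + ‖w‖ * ‖w‖) :=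
      by have := parallelogram_law_with_norm ℂ v w; simp only [sq] at this; exact this
    nlinarith [h4, h5, h6]
  refine ContinuousLinearMap.opNorm_le_bound A hM ?_
  intro v
  rcases eq_or_ne (A v) 0 with hAv | hAv
  · rw [hAv, norm_zero]; positivity
  · rcases eq_or_ne v 0 with rfl | hv
    · simp at hAv
    · have hnAv : (0:ℝ) < ‖A v‖ := norm_pos_iff.2 hAv
      have hnv : (0:ℝ) < ‖v‖ := norm_pos_iff.2 hv
      set w : H := (((‖v‖ / ‖A v‖ : ℝ) : ℂ)) • A v with hw
      have hA0 : ((‖A v‖ : ℝ) : ℂ) ≠ 0 := Complex.ofReal_ne_zero.2 hnAv.ne'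
      have hre : (⟪A v, w⟫_ℂ).re = ‖v‖ * ‖A v‖ := by
        have hAA : (⟪A v, A v⟫_ℂ).re = ‖A v‖ ^ 2 := inner_self_eq_norm_sq (𝕜 := ℂ) (A v)
        rw [hw, inner_smul_right, Complex.re_ofReal_mul, hAA]
        field_simp
      have hnormw : ‖w‖ = ‖v‖ := by
        rw [hw, norm_smul, Complex.norm_real, Real.norm_eq_abs,
          abs_of_nonneg (by positivity)]
        field_simp
      have hb := hbil v w
      rw [hre, hnormw] at hb
      nlinarith

/-- A nonzero symmetric operator mapping the unit ball into a compact set has an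
eigenvector with a nonzero real eigenvalue. -/
lemma exists_eigenvector_of_compact_symmetric {A : H →L[ℂ] H}
    (hsym : ∀ y z : H, ⟪A y, z⟫_ℂ = ⟪y, A z⟫_ℂ) (hA : A ≠ 0)
    {D : Set H} (hD : IsCompact D) (hball : ∀ y : H, ‖y‖ ≤ 1 → A y ∈ D) :
    ∃ (c : ℝ) (v : H), c ≠ 0 ∧ v ≠ 0 ∧ A v = (c : ℂ) • v := by
  set M : ℝ := ‖A‖ with hMdef
  have hM : 0 < M := norm_pos_iff.2 hA
  -- choose approximate maximizers
  have hex : ∀ n : ℕ, ∃ y : H, ‖y‖ ≤ 1 ∧ M - M / (n + 2) < |(⟪A y, y⟫_ℂ).re| := by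
    intro n
    by_contra hcon
    push_neg at hcon
    have hMn : 0 ≤ M - M / (n + 2) := by
      have h1 : M / (n + 2) ≤ M / 1 := by
        apply div_le_div_of_nonneg_left hM.le one_pos
        exact_mod_cast by linarith [Nat.cast_nonneg (α := ℝ) n]
      simp at h1
      linarith
    have := opNorm_le_of_re_inner_bound hsym hMn fun y hy => (hcon y hy)
    have hpos : 0 < M / (n + 2) := by positivity
    rw [← hMdef] at this
    linarith
  choose y hy1 hy2 using hex
  have hAopn : ∀ v : H, ‖v‖ ≤ 1 → ‖A v‖ ≤ M := by
    intro v hv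
    have h1 := A.le_opNorm v
    have h2 : ‖A‖ * ‖v‖ ≤ ‖A‖ * 1 := mul_le_mul_of_nonneg_left hv (norm_nonneg A)
    simpa using h1.trans h2
  set r : ℕ → ℝ := fun n => (⟪A (y n), y n⟫_ℂ).re with hr
  have hrabs : ∀ n, |r n| ≤ M := by
    intro n
    calc |r n| ≤ ‖⟪A (y n), y n⟫_ℂ‖ := Complex.abs_re_le_norm _
      _ ≤ ‖A (y n)‖ * ‖y n‖ := norm_inner_le_norm _ _
      _ ≤ M * 1 := mul_le_mul (hAopn (y n) (hy1 n)) (hy1 n) (norm_nonneg _) hM.le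
      _ = M := mul_one M
  have habs_to : Tendsto (fun n => |r n|) atTop (𝓝 M) := by
    have hlow : ∀ n : ℕ, M - M / (n + 2) ≤ |r n| := fun n => (hy2 n).le
    have h1 : Tendsto (fun n : ℕ => M - M / (n + 2)) atTop (𝓝 M) := by
      have h2 : Tendsto (fun n : ℕ => M / (n + 2)) atTop (𝓝 0) := by
        apply Tendsto.div_atTop tendsto_const_nhds
        exact tendsto_atTop_add_const_right _ 2 (tendsto_natCast_atTop_atTop (R := ℝ))
      simpa using tendsto_const_nhds.sub h2
    exact tendsto_of_tendsto_of_tendsto_of_le_of_le h1 tendsto_const_nhds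
      hlow fun n => hrabs n
  -- extract convergent subsequence of the Rayleigh quotients
  obtain ⟨c, hcmem, φ₁, hφ₁, hc⟩ := (isCompact_Icc (a := -M) (b := M)).tendsto_subseq
    (x := r) (fun n => abs_le.1 (hrabs n))
  have hcM : |c| = M := by
    have h1 : Tendsto (fun n => |r (φ₁ n)|) atTop (𝓝 |c|) := hc.abs
    have h2 : Tendsto (fun n => |r (φ₁ n)|) atTop (𝓝 M) :=
      habs_to.comp hφ₁.tendsto_atTop
    exact tendsto_nhds_unique h1 h2
  have hc0 : c ≠ 0 := fun h => by rw [h, abs_zero] at hcM; exact hM.ne hcM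
  -- extract convergent subsequence of the images
  obtain ⟨w, hwD, φ₂, hφ₂, hw⟩ := hD.tendsto_subseq
    (x := fun n => A (y (φ₁ n))) (fun n => hball _ (hy1 _))
  set g : ℕ → H := fun n => y (φ₁ (φ₂ n)) with hg
  have hrg : Tendsto (fun n => r (φ₁ (φ₂ n))) atTop (𝓝 c) := hc.comp hφ₂.tendsto_atTop
  have hAg : Tendsto (fun n => A (g n)) atTop (𝓝 w) := hw
  -- the key quantitative estimate
  have hkey : Tendsto (fun n => A (g n) - (c : ℂ) • g n) atTop (𝓝 0) := by
    rw [tendsto_zero_iff_norm_tendsto_zero]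
    have hsq : ∀ n, ‖A (g n) - (c : ℂ) • g n‖ ^ 2 ≤ M ^ 2 + c ^ 2 - 2 * c * r (φ₁ (φ₂ n)) := by
      intro n
      have e1 : ‖A (g n) - (c : ℂ) • g n‖ ^ 2
          = ‖A (g n)‖ ^ 2 - 2 * ((⟪A (g n), (c : ℂ) • g n⟫_ℂ).re) + ‖(c : ℂ) • g n‖ ^ 2 := by
        exact_mod_cast norm_sub_sq (𝕜 := ℂ) (A (g n)) ((c : ℂ) • g n)
      have e2 : (⟪A (g n), (c : ℂ) • g n⟫_ℂ).re = c * r (φ₁ (φ₂ n)) := by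
        rw [inner_smul_right, Complex.re_ofReal_mul]
      have e3 : ‖A (g n)‖ ^ 2 ≤ M ^ 2 := by
        have h5 := hAopn (g n) (hy1 _)
        nlinarith [norm_nonneg (A (g n))]
      have e4 : ‖(c : ℂ) • g n‖ ^ 2 ≤ c ^ 2 := by
        rw [norm_smul, Complex.norm_real, Real.norm_eq_abs, mul_pow, sq_abs]
        have h6 := hy1 (φ₁ (φ₂ n))
        have h7 : ‖g n‖ ^ 2 ≤ 1 := by nlinarith [norm_nonneg (g n)]
        nlinarith [sq_nonneg c]
      rw [e1, e2]
      linarith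
    have hrhs : Tendsto (fun n => M ^ 2 + c ^ 2 - 2 * c * r (φ₁ (φ₂ n))) atTop
        (𝓝 (M ^ 2 + c ^ 2 - 2 * c * c)) := by
      exact (tendsto_const_nhds.sub ((tendsto_const_nhds.mul hrg)))
    have hlim0 : M ^ 2 + c ^ 2 - 2 * c * c = 0 := by
      have : c ^ 2 = M ^ 2 := by
        rw [← sq_abs, hcM]
      nlinarith
    rw [hlim0] at hrhs
    have hsqto : Tendsto (fun n => ‖A (g n) - (c : ℂ) • g n‖ ^ 2) atTop (𝓝 0) :=
      tendsto_of_tendsto_of_tendsto_of_le_of_le tendsto_const_nhds hrhs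
        (fun n => by positivity) hsq
    have := hsqto.sqrt
    simp only [Real.sqrt_zero] at this
    convert this using 2 with n
    rw [Real.sqrt_sq (norm_nonneg _)]
  -- conclude
  have hgc : Tendsto (fun n => (c : ℂ) • g n) atTop (𝓝 w) := by
    have := hAg.sub hkey
    simpa using this
  have hgto : Tendsto g atTop (𝓝 (((c : ℂ))⁻¹ • w)) := by
    have hc0' : ((c : ℝ) : ℂ) ≠ 0 := Complex.ofReal_ne_zero.2 hc0
    have hfe : g = fun n => ((c : ℂ))⁻¹ • ((c : ℂ) • g n) := by
      funext n
      rw [smul_smul, inv_mul_cancel₀ hc0', one_smul]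
    rw [hfe]
    exact hgc.const_smul _
  have hAw : A (((c : ℂ))⁻¹ • w) = ((c : ℂ))⁻¹ • A w := map_smul _ _ _
  have hAgto : Tendsto (fun n => A (g n)) atTop (𝓝 (A (((c : ℂ))⁻¹ • w))) :=
    (A.continuous.tendsto _).comp hgto
  have hweq : A (((c : ℂ))⁻¹ • w) = w := tendsto_nhds_unique hAgto hAg
  -- w ≠ 0
  have hwne : w ≠ 0 := by
    have hnAg : Tendsto (fun n => ‖A (g n)‖) atTop (𝓝 ‖w‖) := hAg.norm
    have hlow : ∀ n, M - M / (φ₁ (φ₂ n) + 2) ≤ ‖A (g n)‖ := by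
      intro n
      have h1 := (hy2 (φ₁ (φ₂ n))).le
      calc M - M / (φ₁ (φ₂ n) + 2) ≤ |r (φ₁ (φ₂ n))| := h1
        _ ≤ ‖⟪A (g n), g n⟫_ℂ‖ := Complex.abs_re_le_norm _
        _ ≤ ‖A (g n)‖ * ‖g n‖ := norm_inner_le_norm _ _
        _ ≤ ‖A (g n)‖ * 1 := mul_le_mul le_rfl (hy1 _) (norm_nonneg _) (norm_nonneg _)
        _ = ‖A (g n)‖ := mul_one _
    have hMlow : M / 2 ≤ ‖w‖ := by
      have hev : ∀ᶠ n in atTop, M / 2 ≤ ‖A (g n)‖ := by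
        have hdiv : Tendsto (fun n : ℕ => M / (φ₁ (φ₂ n) + 2)) atTop (𝓝 0) := by
          apply Tendsto.div_atTop tendsto_const_nhds
          exact tendsto_atTop_add_const_right _ 2
            ((tendsto_natCast_atTop_atTop (R := ℝ)).comp ((hφ₁.comp hφ₂).tendsto_atTop))
        have : ∀ᶠ n in atTop, M / (φ₁ (φ₂ n) + 2) < M / 2 := by
          have := hdiv.eventually (eventually_lt_nhds (by positivity : (0:ℝ) < M / 2))
          exact this
        filter_upwards [this] with n hn
        have := hlow n
        linarith
      exact ge_of_tendsto hnAg hev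
    intro h0
    rw [h0, norm_zero] at hMlow
    have : 0 < M / 2 := by positivity
    linarith
  refine ⟨c, ((c : ℂ))⁻¹ • w, hc0, ?_, ?_⟩
  · simp only [ne_eq, smul_eq_zero, inv_eq_zero, Complex.ofReal_eq_zero, not_or]
    exact ⟨hc0, hwne⟩
  · have hc0' : ((c : ℝ) : ℂ) ≠ 0 := Complex.ofReal_ne_zero.2 hc0
    rw [hweq, smul_smul, mul_inv_cancel₀ hc0', one_smul]


/-- The rank one operator `y ↦ ⟪u, y⟫ • u`. -/
noncomputable def Rop (u : H) : H →L[ℂ] H := (innerSL ℂ u).smulRight u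

lemma Rop_apply (u y : H) : Rop u y = ⟪u, y⟫_ℂ • u := rfl

lemma Rop_symm (u y z : H) : ⟪Rop u y, z⟫_ℂ = ⟪y, Rop u z⟫_ℂ := by
  rw [Rop_apply, Rop_apply, inner_smul_left, inner_smul_right, ← inner_conj_symm y u]
  ring

lemma Rop_norm_le (u : H) : ‖Rop u‖ ≤ ‖u‖ ^ 2 := by
  refine ContinuousLinearMap.opNorm_le_bound _ (by positivity) fun y => ?_
  rw [Rop_apply, norm_smul]
  calc ‖⟪u, y⟫_ℂ‖ * ‖u‖ ≤ ‖u‖ * ‖y‖ * ‖u‖ :=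
        mul_le_mul_of_nonneg_right (norm_inner_le_norm u y) (norm_nonneg u)
    _ = ‖u‖ ^ 2 * ‖y‖ := by ring

lemma Rop_sub_norm_le (u v : H) : ‖Rop u - Rop v‖ ≤ (‖u‖ + ‖v‖) * ‖u - v‖ := by
  refine ContinuousLinearMap.opNorm_le_bound _ (by positivity) fun y => ?_
  have hdecomp : (Rop u - Rop v) y = ⟪u - v, y⟫_ℂ • u + ⟪v, y⟫_ℂ • (u - v) := by
    rw [ContinuousLinearMap.sub_apply, Rop_apply, Rop_apply, inner_sub_left]
    rw [sub_smul, smul_sub]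
    abel
  rw [hdecomp]
  calc ‖⟪u - v, y⟫_ℂ • u + ⟪v, y⟫_ℂ • (u - v)‖
      ≤ ‖⟪u - v, y⟫_ℂ • u‖ + ‖⟪v, y⟫_ℂ • (u - v)‖ := norm_add_le _ _
    _ = ‖⟪u - v, y⟫_ℂ‖ * ‖u‖ + ‖⟪v, y⟫_ℂ‖ * ‖u - v‖ := by rw [norm_smul, norm_smul]
    _ ≤ (‖u - v‖ * ‖y‖) * ‖u‖ + (‖v‖ * ‖y‖) * ‖u - v‖ := by
        gcongr <;> exact norm_inner_le_norm _ _
    _ = (‖u‖ + ‖v‖) * ‖u - v‖ * ‖y‖ := by ring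

lemma Rop_continuous : Continuous (Rop (H := H)) := by
  rw [Metric.continuous_iff]
  intro u ε hε
  refine ⟨min 1 (ε / (2 * ‖u‖ + 2)), by positivity, fun v hv => ?_⟩
  rw [dist_eq_norm] at hv ⊢
  have h1 : ‖v - u‖ < 1 := lt_of_lt_of_le hv (min_le_left _ _)
  have h2 : ‖v - u‖ < ε / (2 * ‖u‖ + 2) := lt_of_lt_of_le hv (min_le_right _ _)
  have h3 : ‖v‖ ≤ ‖u‖ + 1 := by
    have := norm_sub_norm_le v u
    linarith
  calc ‖Rop v - Rop u‖ ≤ (‖v‖ + ‖u‖) * ‖v - u‖ := Rop_sub_norm_le v u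
    _ ≤ (2 * ‖u‖ + 2) * ‖v - u‖ := by
        apply mul_le_mul_of_nonneg_right _ (norm_nonneg _)
        linarith
    _ < (2 * ‖u‖ + 2) * (ε / (2 * ‖u‖ + 2)) := by
        apply mul_lt_mul_of_pos_left h2 (by positivity)
    _ = ε := by field_simp

lemma Rop_conj (U : unitary (H →L[ℂ] H)) (u : H) :
    (U : H →L[ℂ] H) * Rop u * star (U : H →L[ℂ] H) = Rop ((U : H →L[ℂ] H) u) := by
  ext y
  rw [ContinuousLinearMap.mul_apply, ContinuousLinearMap.mul_apply, Rop_apply, Rop_apply,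
    map_smul, ContinuousLinearMap.star_eq_adjoint, ContinuousLinearMap.adjoint_inner_right]

/-- shifting orbit differences -/
lemma orbit_shift (U : unitary (H →L[ℂ] H)) (x : H) (a b : ℤ) :
    ‖((U ^ a : unitary (H →L[ℂ] H)) : H →L[ℂ] H) x
      - ((U ^ b : unitary (H →L[ℂ] H)) : H →L[ℂ] H) x‖
    = ‖((U ^ (a - b) : unitary (H →L[ℂ] H)) : H →L[ℂ] H) x - x‖ := by
  have hsplit : (U ^ a : unitary (H →L[ℂ] H)) = (U ^ b) * (U ^ (a - b)) := by
    rw [← zpow_add]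
    congr 1
    ring
  have : ((U ^ a : unitary (H →L[ℂ] H)) : H →L[ℂ] H) x
      = ((U ^ b : unitary (H →L[ℂ] H)) : H →L[ℂ] H)
        (((U ^ (a - b) : unitary (H →L[ℂ] H)) : H →L[ℂ] H) x) := by
    rw [hsplit]; rfl
  rw [this, ← map_sub, unitary_norm]


/-- Syndetic return times with good inner product lower bound. -/
lemma exists_syndetic_returns (U : unitary (H →L[ℂ] H)) {x : H} (hx : x ≠ 0)
    (hcomp : IsCompact (closure (orb U x))) :
    ∃ L : ℕ, 0 < L ∧ ∀ j : ℕ, ∃ n : ℕ, j * L ≤ n ∧ n < j * L + L ∧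
      ‖x‖ ^ 2 / 2 ≤ (⟪((U : H →L[ℂ] H) ^ n) x, x⟫_ℂ).re := by
  have hxpos : (0:ℝ) < ‖x‖ := norm_pos_iff.2 hx
  -- the orbit closure is covered by balls of radius ‖x‖/2 around orbit points
  have hcover : closure (orb U x) ⊆
      ⋃ i : ℤ, Metric.ball (((U ^ i : unitary (H →L[ℂ] H)) : H →L[ℂ] H) x) (‖x‖ / 2) := by
    intro w hw
    obtain ⟨y, hy, hdist⟩ := Metric.mem_closure_iff.1 hw (‖x‖ / 2) (by positivity)
    obtain ⟨i, rfl⟩ := hy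
    exact Set.mem_iUnion.2 ⟨i, Metric.mem_ball.2 hdist⟩
  obtain ⟨t, ht⟩ := hcomp.elim_finite_subcover _
    (fun i : ℤ => Metric.isOpen_ball) hcover
  -- t is a nonempty finite set of integers
  have hxK : x ∈ closure (orb U x) := subset_closure ⟨0, by
    rw [zpow_zero]; rfl⟩
  set L' : ℕ := t.sup (fun i => i.natAbs) with hL'
  refine ⟨2 * L' + 1, Nat.succ_pos _, fun j => ?_⟩
  set a : ℤ := ((j * (2 * L' + 1) + L' : ℕ) : ℤ) with ha
  have haK : ((U ^ a : unitary (H →L[ℂ] H)) : H →L[ℂ] H) x ∈ closure (orb U x) :=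
    subset_closure ⟨a, rfl⟩
  obtain ⟨i, hit, hball⟩ := Set.mem_iUnion₂.1 (ht haK)
  have habs : i.natAbs ≤ L' := Finset.le_sup hit
  have hile : -(L' : ℤ) ≤ i ∧ i ≤ (L' : ℤ) := by omega
  set nZ : ℤ := a - i with hnZ
  have hnZlow : (j * (2 * L' + 1) : ℕ) ≤ nZ := by
    have : a = ((j * (2 * L' + 1) + L' : ℕ) : ℤ) := ha
    push_cast at this ⊢
    omega
  have hnZhigh : nZ < (j * (2 * L' + 1) + (2 * L' + 1) : ℕ) := by
    have : a = ((j * (2 * L' + 1) + L' : ℕ) : ℤ) := ha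
    push_cast at this ⊢
    omega
  have hnZ0 : 0 ≤ nZ := le_trans (by positivity) hnZlow
  refine ⟨nZ.toNat, ?_, ?_, ?_⟩
  · omega
  · omega
  · have hdist : ‖((U ^ a : unitary (H →L[ℂ] H)) : H →L[ℂ] H) x
        - ((U ^ i : unitary (H →L[ℂ] H)) : H →L[ℂ] H) x‖ < ‖x‖ / 2 := by
      rw [← dist_eq_norm]
      exact Metric.mem_ball.1 hball
    rw [orbit_shift] at hdist
    have hcast : (U ^ (a - i) : unitary (H →L[ℂ] H)) = U ^ (nZ.toNat : ℕ) := by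
      rw [← zpow_natCast U nZ.toNat]
      congr 1
      omega
    rw [hcast, unitary_coe_pow] at hdist
    set V : H →L[ℂ] H := (U : H →L[ℂ] H)
    have hnorm : ‖(V ^ nZ.toNat) x‖ = ‖x‖ := by
      rw [← unitary_coe_pow]
      exact unitary_norm (U ^ nZ.toNat) x
    have hsq : ‖(V ^ nZ.toNat) x - x‖ ^ 2
        = ‖(V ^ nZ.toNat) x‖ ^ 2 - 2 * ((⟪(V ^ nZ.toNat) x, x⟫_ℂ).re) + ‖x‖ ^ 2 := by
      exact_mod_cast norm_sub_sq (𝕜 := ℂ) ((V ^ nZ.toNat) x) x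
    rw [hnorm] at hsq
    have hlt : ‖(V ^ nZ.toNat) x - x‖ ^ 2 < (‖x‖ / 2) ^ 2 := by
      apply sq_lt_sq' _ hdist
      have := norm_nonneg ((V ^ nZ.toNat) x - x)
      linarith
    nlinarith [norm_nonneg ((V ^ nZ.toNat) x - x)]

-- small generic helpers
lemma real_smul_eq_complex_smul (r : ℝ) (v : H) : r • v = ((r : ℂ)) • v := by
  rw [← algebraMap_smul ℂ r v, Complex.coe_algebraMap]

lemma re_inner_real_smul_left (r : ℝ) (w z : H) :
    (⟪(r • w : H), z⟫_ℂ).re = r * (⟪w, z⟫_ℂ).re := by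
  rw [real_smul_eq_complex_smul, inner_smul_left, Complex.conj_ofReal, Complex.re_ofReal_mul]

lemma inv_smul_sum_mem_convexHull {E' : Type*} [AddCommGroup E'] [Module ℝ E']
    {N : ℕ} (hN : 0 < N) {y : ℕ → E'} {s : Set E'} (hy : ∀ n, n < N → y n ∈ s) :
    (N : ℝ)⁻¹ • (∑ n ∈ Finset.range N, y n) ∈ convexHull ℝ s := by
  have h := Finset.centerMass_mem_convexHull (Finset.range N) (w := fun _ => (1 : ℝ))
    (fun _ _ => zero_le_one)
    (by
      simp only [Finset.sum_const, Finset.card_range, nsmul_eq_mul, mul_one]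
      exact_mod_cast hN)
    (z := y) (fun i hi => hy i (Finset.mem_range.1 hi))
  simpa [Finset.centerMass, Finset.sum_const, Finset.card_range, nsmul_eq_mul] using h

/-- Main lemma: forward direction. -/
lemma forward (U : unitary (H →L[ℂ] H))
    (h : ∀ x : H, IsCompact (closure (orb U x))) :
    (Submodule.span ℂ {x : H | ∃ z : ℂ, x ≠ 0 ∧ (U : H →L[ℂ] H) x = z • x}).topologicalClosure
      = ⊤ := by
  set V : H →L[ℂ] H := (U : H →L[ℂ] H) with hV
  set S₀ : Set H := {x : H | ∃ z : ℂ, x ≠ 0 ∧ V x = z • x} with hS₀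
  set E : Submodule ℂ H := Submodule.span ℂ S₀ with hE
  suffices hbot : Eᗮ = ⊥ by
    rw [← Submodule.orthogonal_orthogonal_eq_closure, hbot, Submodule.bot_orthogonal_eq_top]
  rw [Submodule.eq_bot_iff]
  intro x hxW
  by_contra hx
  -- invariance of the orthogonal complement
  have hWinv : ∀ w, w ∈ Eᗮ → V w ∈ Eᗮ := by
    intro w hw
    rw [Submodule.mem_orthogonal]
    intro e he
    induction he using Submodule.span_induction with
    | mem e hyp =>
      obtain ⟨z, hez, hVe⟩ := hyp
      have hz1 : ‖z‖ = 1 := by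
        have h1 : ‖V e‖ = ‖e‖ := unitary_norm U e
        rw [hVe, norm_smul] at h1
        have : ‖e‖ ≠ 0 := norm_ne_zero_iff.2 hez
        field_simp at h1
        tauto
      have hz0 : z ≠ 0 := by
        intro h0
        rw [h0, norm_zero] at hz1
        norm_num at hz1
      have hVe' : V (z⁻¹ • e) = e := by
        rw [map_smul, hVe, smul_smul, inv_mul_cancel₀ hz0, one_smul]
      calc ⟪e, V w⟫_ℂ = ⟪V (z⁻¹ • e), V w⟫_ℂ := by rw [hVe']
        _ = ⟪z⁻¹ • e, w⟫_ℂ := unitary_inner U _ _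
        _ = (starRingEnd ℂ) z⁻¹ * ⟪e, w⟫_ℂ := inner_smul_left _ _ _
        _ = 0 := by
            rw [(Submodule.mem_orthogonal E w).1 hw e (Submodule.subset_span ⟨z, hez, hVe⟩)]
            ring
    | zero => exact inner_zero_left _
    | add a b _ _ ha hb => rw [inner_add_left, ha, hb, add_zero]
    | smul c a _ ha => rw [inner_smul_left, ha, mul_zero]
  -- the orbit sequence
  set u : ℕ → H := fun n => (V ^ n) x with hu
  have hu_succ : ∀ n, u (n + 1) = V (u n) := by
    intro n
    rw [hu]
    simp only
    rw [pow_succ']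
    rfl
  have hu_mem : ∀ n, u n ∈ Eᗮ := by
    intro n
    induction n with
    | zero => simpa [hu] using hxW
    | succ k ih => rw [hu_succ k]; exact hWinv _ ih
  have hu_norm : ∀ n, ‖u n‖ = ‖x‖ := by
    intro n
    rw [hu]
    simp only
    rw [← unitary_coe_pow]
    exact unitary_norm _ x
  have hu_orb : ∀ n, u n ∈ closure (orb U x) := by
    intro n
    apply subset_closure
    exact ⟨(n : ℤ), by rw [zpow_natCast, unitary_coe_pow]⟩
  -- syndetic returns
  obtain ⟨L, hL, hret⟩ := exists_syndetic_returns U hx (h x)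
  -- Cesàro averages of the rank one projections along the orbit
  set AN : ℕ → (H →L[ℂ] H) := fun N => (N : ℝ)⁻¹ • ∑ n ∈ Finset.range N, Rop (u n) with hAN
  set C : Set (H →L[ℂ] H) := Rop '' closure (orb U x) with hC
  have hCcomp : IsCompact C := (h x).image Rop_continuous
  set S : Set (H →L[ℂ] H) := closure (convexHull ℝ C) with hS
  have hScomp : IsCompact S := by
    rw [isCompact_iff_totallyBounded_isComplete]
    exact ⟨(totallyBounded_convexHull.mpr hCcomp.totallyBounded).closure,
      isClosed_closure.isComplete⟩
  have hmem : ∀ N : ℕ, 0 < N → AN N ∈ S := by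
    intro N hN
    apply subset_closure
    exact inv_smul_sum_mem_convexHull hN fun n _ => ⟨u n, hu_orb n, rfl⟩
  set Nseq : ℕ → ℕ := fun m => (m + 1) * L with hNseq
  have hNseq_pos : ∀ m, 0 < Nseq m := fun m => Nat.mul_pos (Nat.succ_pos m) hL
  obtain ⟨A, hAS, φ, hφ, hAto⟩ := hScomp.tendsto_subseq
    (x := fun m => AN (Nseq m)) (fun m => hmem _ (hNseq_pos m))
  -- pointwise convergence
  have happ : ∀ y : H, Tendsto (fun m => AN (Nseq (φ m)) y) atTop (𝓝 (A y)) := by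
    intro y
    have hconts : Continuous fun T : H →L[ℂ] H => T y :=
      (ContinuousLinearMap.apply ℂ H y).continuous
    exact (hconts.tendsto A).comp hAto
  -- symmetry of A
  have hANsym : ∀ N (y z : H), ⟪AN N y, z⟫_ℂ = ⟪y, AN N z⟫_ℂ := by
    intro N y z
    rw [hAN]
    simp only [ContinuousLinearMap.smul_apply, ContinuousLinearMap.sum_apply]
    rw [real_smul_eq_complex_smul, real_smul_eq_complex_smul, inner_smul_left,
      inner_smul_right, sum_inner, inner_sum]
    rw [Complex.conj_ofReal]
    congr 1
    exact Finset.sum_congr rfl fun n _ => Rop_symm (u n) y z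
  have hAsym : ∀ y z : H, ⟪A y, z⟫_ℂ = ⟪y, A z⟫_ℂ := by
    intro y z
    have h1 : Tendsto (fun m => ⟪AN (Nseq (φ m)) y, z⟫_ℂ) atTop (𝓝 ⟪A y, z⟫_ℂ) :=
      (happ y).inner tendsto_const_nhds
    have h2 : Tendsto (fun m => ⟪y, AN (Nseq (φ m)) z⟫_ℂ) atTop (𝓝 ⟪y, A z⟫_ℂ) :=
      tendsto_const_nhds.inner (happ z)
    have heq : (fun m => ⟪AN (Nseq (φ m)) y, z⟫_ℂ) = fun m => ⟪y, AN (Nseq (φ m)) z⟫_ℂ :=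
      funext fun m => hANsym _ y z
    rw [heq] at h1
    exact tendsto_nhds_unique h1 h2
  -- range of A is inside the orthogonal complement
  have hrange : ∀ y : H, A y ∈ Eᗮ := by
    intro y
    have hN : ∀ N, AN N y ∈ Eᗮ := by
      intro N
      rw [hAN]
      simp only [ContinuousLinearMap.smul_apply, ContinuousLinearMap.sum_apply]
      rw [real_smul_eq_complex_smul]
      apply Submodule.smul_mem
      apply Submodule.sum_mem
      intro n _
      rw [Rop_apply]
      exact Submodule.smul_mem _ _ (hu_mem n)
    have hclosed : IsClosed (Eᗮ : Set H) := Submodule.isClosed_orthogonal E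
    have := hclosed.mem_of_tendsto (happ y) (Eventually.of_forall fun m => hN _)
    exact this
  -- the diagonal pairing: lower bound
  set f : ℕ → ℝ := fun n => ‖⟪u n, x⟫_ℂ‖ ^ 2 with hf
  have hconj_mul : ∀ z : ℂ, ((starRingEnd ℂ) z * z).re = ‖z‖ ^ 2 := by
    intro z
    rw [mul_comm, Complex.mul_conj, Complex.ofReal_re, Complex.normSq_eq_norm_sq]
  have hre_Rop : ∀ n, (⟪Rop (u n) x, x⟫_ℂ).re = f n := by
    intro n
    rw [Rop_apply, inner_smul_left, hconj_mul]
  have hre_AN : ∀ N : ℕ, (⟪AN N x, x⟫_ℂ).re = (N : ℝ)⁻¹ * ∑ n ∈ Finset.range N, f n := by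
    intro N
    rw [hAN]
    simp only [ContinuousLinearMap.smul_apply, ContinuousLinearMap.sum_apply]
    rw [re_inner_real_smul_left, sum_inner]
    congr 1
    rw [Complex.re_sum]
    exact Finset.sum_congr rfl fun n _ => hre_Rop n
  have hfnonneg : ∀ n, 0 ≤ f n := fun n => by positivity
  have hblock : ∀ j : ℕ, ∃ n : ℕ, j * L ≤ n ∧ n < j * L + L ∧ ‖x‖ ^ 4 / 4 ≤ f n := by
    intro j
    obtain ⟨n, h1, h2, h3⟩ := hret j
    refine ⟨n, h1, h2, ?_⟩
    have habs : |(⟪u n, x⟫_ℂ).re| ≤ ‖⟪u n, x⟫_ℂ‖ := Complex.abs_re_le_norm _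
    have hxpos : (0:ℝ) < ‖x‖ := norm_pos_iff.2 hx
    have h3' : ‖x‖ ^ 2 / 2 ≤ (⟪u n, x⟫_ℂ).re := h3
    have h4 : ‖x‖ ^ 2 / 2 ≤ ‖⟪u n, x⟫_ℂ‖ := le_trans h3' (le_trans (le_abs_self _) habs)
    rw [hf]
    simp only
    nlinarith [norm_nonneg (⟪u n, x⟫_ℂ)]
  have hsum : ∀ m : ℕ, (m : ℝ) * (‖x‖ ^ 4 / 4) ≤ ∑ n ∈ Finset.range (m * L), f n := by
    intro m
    induction m with
    | zero => simp
    | succ k ih =>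
      have hsplit : ∑ n ∈ Finset.range ((k + 1) * L), f n
          = ∑ n ∈ Finset.range (k * L), f n + ∑ n ∈ Finset.Ico (k * L) (k * L + L), f n := by
        rw [Nat.succ_mul, Finset.range_eq_Ico,
          ← Finset.sum_Ico_consecutive f (Nat.zero_le (k * L)) (Nat.le_add_right (k * L) L),
          ← Finset.range_eq_Ico]
      obtain ⟨n, hn1, hn2, hn3⟩ := hblock k
      have hmem' : n ∈ Finset.Ico (k * L) (k * L + L) := Finset.mem_Ico.2 ⟨hn1, hn2⟩
      have hsingle : ‖x‖ ^ 4 / 4 ≤ ∑ n ∈ Finset.Ico (k * L) (k * L + L), f n :=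
        le_trans hn3 (Finset.single_le_sum (fun i _ => hfnonneg i) hmem')
      rw [hsplit]
      push_cast
      linarith
  have hANlow : ∀ m : ℕ, ‖x‖ ^ 4 / (4 * L) ≤ (⟪AN (Nseq m) x, x⟫_ℂ).re := by
    intro m
    rw [hre_AN, hNseq]
    simp only
    have hLpos : (0:ℝ) < (L : ℝ) := by exact_mod_cast hL
    have hmpos : (0:ℝ) < (((m + 1) * L : ℕ) : ℝ) := by
      have := Nat.mul_pos (Nat.succ_pos m) hL
      exact_mod_cast this
    have h1 := hsum (m + 1)
    have h3 : (((m + 1) * L : ℕ) : ℝ)⁻¹ * (((m + 1 : ℕ) : ℝ) * (‖x‖ ^ 4 / 4))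
        ≤ (((m + 1) * L : ℕ) : ℝ)⁻¹ * ∑ n ∈ Finset.range ((m + 1) * L), f n := by
      apply mul_le_mul_of_nonneg_left _ (by positivity)
      exact_mod_cast h1
    have heq : (((m + 1) * L : ℕ) : ℝ)⁻¹ * (((m + 1 : ℕ) : ℝ) * (‖x‖ ^ 4 / 4))
        = ‖x‖ ^ 4 / (4 * L) := by
      push_cast
      field_simp
    rw [heq] at h3
    exact h3
  have hxpos : (0:ℝ) < ‖x‖ := norm_pos_iff.2 hx
  have hLpos : (0:ℝ) < (L : ℝ) := by exact_mod_cast hL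
  have hApos : ‖x‖ ^ 4 / (4 * L) ≤ (⟪A x, x⟫_ℂ).re := by
    have htend : Tendsto (fun m => (⟪AN (Nseq (φ m)) x, x⟫_ℂ).re) atTop (𝓝 ((⟪A x, x⟫_ℂ).re)) :=
      (Complex.continuous_re.tendsto _).comp ((happ x).inner tendsto_const_nhds)
    exact ge_of_tendsto htend (Eventually.of_forall fun m => hANlow (φ m))
  have hAne : A ≠ 0 := by
    intro h0
    rw [h0] at hApos
    simp only [ContinuousLinearMap.zero_apply, inner_zero_left, Complex.zero_re] at hApos
    have : (0:ℝ) < ‖x‖ ^ 4 / (4 * L) := by positivity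
    linarith
  -- A commutes with V
  have hUU : star V * V = 1 := (Unitary.mem_iff.mp U.2).1
  have hVV : V * star V = 1 := (Unitary.mem_iff.mp U.2).2
  have hconjN : ∀ N : ℕ, V * AN N * star V = AN N + (N : ℝ)⁻¹ • (Rop (u N) - Rop (u 0)) := by
    intro N
    rw [hAN]
    simp only
    rw [mul_smul_comm, smul_mul_assoc]
    rw [Finset.mul_sum, Finset.sum_mul]
    have hsum1 : ∑ n ∈ Finset.range N, V * Rop (u n) * star V
        = ∑ n ∈ Finset.range N, Rop (u (n + 1)) := by
      refine Finset.sum_congr rfl ?_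
      intro n hn
      rw [hu_succ n]
      exact Rop_conj U (u n)
    have hsum2 : ∑ n ∈ Finset.range N, Rop (u (n + 1))
        = ∑ n ∈ Finset.range N, Rop (u n) + (Rop (u N) - Rop (u 0)) := by
      have h1 := Finset.sum_range_succ' (fun n => Rop (u n)) N
      have h2 := Finset.sum_range_succ (fun n => Rop (u n)) N
      rw [h2] at h1
      calc ∑ n ∈ Finset.range N, Rop (u (n + 1))
          = (∑ n ∈ Finset.range N, Rop (u (n + 1)) + Rop (u 0)) - Rop (u 0) := by abel
        _ = (∑ n ∈ Finset.range N, Rop (u n) + Rop (u N)) - Rop (u 0) := by rw [← h1]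
        _ = ∑ n ∈ Finset.range N, Rop (u n) + (Rop (u N) - Rop (u 0)) := by abel
    rw [hsum1, hsum2, smul_add]
  have hRopBound : ∀ n : ℕ, ‖Rop (u n)‖ ≤ ‖x‖ ^ 2 := by
    intro n
    have := Rop_norm_le (u n)
    rwa [hu_norm n] at this
  have hNseq_tendsto : Tendsto (fun m => ((Nseq (φ m) : ℕ) : ℝ)) atTop atTop := by
    apply tendsto_atTop_mono _ tendsto_natCast_atTop_atTop
    intro m
    have h1 : m ≤ φ m := hφ.le_apply
    have h2 : φ m ≤ (φ m + 1) * L := by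
      calc φ m ≤ φ m + 1 := Nat.le_succ _
        _ ≤ (φ m + 1) * L := Nat.le_mul_of_pos_right _ hL
    have : m ≤ Nseq (φ m) := le_trans h1 h2
    exact_mod_cast this
  have hcorr : Tendsto (fun m => ((Nseq (φ m) : ℕ) : ℝ)⁻¹ •
      (Rop (u (Nseq (φ m))) - Rop (u 0))) atTop (𝓝 (0 : H →L[ℂ] H)) := by
    have hbnd : ∀ m : ℕ, ‖((Nseq (φ m) : ℕ) : ℝ)⁻¹ • (Rop (u (Nseq (φ m))) - Rop (u 0))‖
        ≤ ((Nseq (φ m) : ℕ) : ℝ)⁻¹ * (2 * ‖x‖ ^ 2) := by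
      intro m
      rw [norm_smul, norm_inv, Real.norm_natCast]
      apply mul_le_mul_of_nonneg_left _ (by positivity)
      calc ‖Rop (u (Nseq (φ m))) - Rop (u 0)‖
          ≤ ‖Rop (u (Nseq (φ m)))‖ + ‖Rop (u 0)‖ := norm_sub_le _ _
        _ ≤ ‖x‖ ^ 2 + ‖x‖ ^ 2 := add_le_add (hRopBound _) (hRopBound _)
        _ = 2 * ‖x‖ ^ 2 := by ring
    have hgb : Tendsto (fun m => ((Nseq (φ m) : ℕ) : ℝ)⁻¹ * (2 * ‖x‖ ^ 2)) atTop (𝓝 0) := by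
      have := (tendsto_inv_atTop_zero.comp hNseq_tendsto).mul_const (2 * ‖x‖ ^ 2)
      simpa using this
    exact squeeze_zero_norm hbnd hgb
  have hAconj : V * A * star V = A := by
    have hleft : Tendsto (fun m => V * AN (Nseq (φ m)) * star V) atTop
        (𝓝 (V * A * star V)) := (tendsto_const_nhds.mul hAto).mul tendsto_const_nhds
    have hright : Tendsto (fun m => AN (Nseq (φ m)) + ((Nseq (φ m) : ℕ) : ℝ)⁻¹ •
        (Rop (u (Nseq (φ m))) - Rop (u 0))) atTop (𝓝 (A + 0)) := hAto.add hcorr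
    rw [add_zero] at hright
    have heq : (fun m => V * AN (Nseq (φ m)) * star V)
        = fun m => AN (Nseq (φ m)) + ((Nseq (φ m) : ℕ) : ℝ)⁻¹ •
          (Rop (u (Nseq (φ m))) - Rop (u 0)) := funext fun m => hconjN _
    rw [heq] at hleft
    exact tendsto_nhds_unique hleft hright
  have hAcomm : V * A = A * V := by
    have h1 := congrArg (fun T => T * V) hAconj
    rw [mul_assoc (V * A) (star V) V, hUU, mul_one] at h1
    exact h1
  -- a compact set absorbing the image of the unit ball
  set Q : Set H := (fun p : ℂ × H => p.1 • p.2) ''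
    (Metric.closedBall (0 : ℂ) ‖x‖ ×ˢ closure (orb U x)) with hQ
  have hQcomp : IsCompact Q :=
    ((isCompact_closedBall (0 : ℂ) ‖x‖).prod (h x)).image continuous_smul
  set D : Set H := closure (convexHull ℝ Q) with hD
  have hDcomp : IsCompact D := by
    rw [isCompact_iff_totallyBounded_isComplete]
    exact ⟨(totallyBounded_convexHull.mpr hQcomp.totallyBounded).closure,
      isClosed_closure.isComplete⟩
  have hballD : ∀ y : H, ‖y‖ ≤ 1 → A y ∈ D := by
    intro y hy
    have hmemN : ∀ N : ℕ, 0 < N → AN N y ∈ convexHull ℝ Q := by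
      intro N hN
      have : AN N y = (N : ℝ)⁻¹ • ∑ n ∈ Finset.range N, Rop (u n) y := by
        rw [hAN]
        simp only [ContinuousLinearMap.smul_apply, ContinuousLinearMap.sum_apply]
      rw [this]
      apply inv_smul_sum_mem_convexHull hN
      intro n _
      rw [Rop_apply]
      refine ⟨(⟪u n, y⟫_ℂ, u n), Set.mk_mem_prod ?_ (hu_orb n), rfl⟩
      rw [Metric.mem_closedBall, dist_zero_right]
      calc ‖⟪u n, y⟫_ℂ‖ ≤ ‖u n‖ * ‖y‖ := norm_inner_le_norm _ _
        _ ≤ ‖x‖ * 1 := by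
            rw [hu_norm n]
            exact mul_le_mul_of_nonneg_left hy (norm_nonneg x)
        _ = ‖x‖ := mul_one _
    have hclosed : IsClosed D := isClosed_closure
    apply hclosed.mem_of_tendsto (happ y)
    exact Eventually.of_forall fun m => subset_closure (hmemN _ (hNseq_pos (φ m)))
  -- extract an eigenvector of A
  obtain ⟨c, v, hc0, hv0, hAv⟩ :=
    exists_eigenvector_of_compact_symmetric hAsym hAne hDcomp hballD
  have hc0' : ((c : ℝ) : ℂ) ≠ 0 := Complex.ofReal_ne_zero.2 hc0
  -- the eigenspace of A
  set B : H →L[ℂ] H := A - (c : ℂ) • (1 : H →L[ℂ] H) with hB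
  set Ec : Submodule ℂ H := LinearMap.ker (B : H →ₗ[ℂ] H) with hEc
  have hmemEc : ∀ w : H, w ∈ Ec ↔ A w = (c : ℂ) • w := by
    intro w
    have hBw : B w = A w - (c : ℂ) • w := by
      rw [hB]
      simp only [ContinuousLinearMap.sub_apply, ContinuousLinearMap.smul_apply,
        ContinuousLinearMap.one_apply]
    rw [hEc, LinearMap.mem_ker]
    show B w = 0 ↔ _
    rw [hBw, sub_eq_zero]
  have hEcClosed : IsClosed (Ec : Set H) := ContinuousLinearMap.isClosed_ker B
  -- the eigenspace is finite dimensional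
  set D' : Set H := (fun w : H => ((c : ℂ))⁻¹ • w) '' D with hD'
  have hD'comp : IsCompact D' := hDcomp.image (continuous_const_smul _)
  have hsub : (Ec : Set H) ∩ Metric.closedBall 0 1 ⊆ D' := by
    rintro w ⟨hw1, hw2⟩
    rw [Metric.mem_closedBall, dist_zero_right] at hw2
    refine ⟨A w, hballD w hw2, ?_⟩
    show ((c : ℂ))⁻¹ • A w = w
    rw [(hmemEc w).1 hw1, smul_smul, inv_mul_cancel₀ hc0', one_smul]
  have hS1comp : IsCompact ((Ec : Set H) ∩ Metric.closedBall 0 1) :=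
    hD'comp.of_isClosed_subset (hEcClosed.inter Metric.isClosed_closedBall) hsub
  have hballEc : IsCompact (Metric.closedBall (0 : Ec) 1) := by
    rw [Topology.IsEmbedding.subtypeVal.isCompact_iff]
    have himg : (Subtype.val '' (Metric.closedBall (0 : Ec) 1))
        = (Ec : Set H) ∩ Metric.closedBall 0 1 := by
      ext w
      constructor
      · rintro ⟨⟨w', hw'⟩, hball, rfl⟩
        rw [Metric.mem_closedBall, dist_zero_right] at hball
        exact ⟨hw', by rwa [Metric.mem_closedBall, dist_zero_right]⟩
      · rintro ⟨hw1, hw2⟩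
        rw [Metric.mem_closedBall, dist_zero_right] at hw2
        exact ⟨⟨w, hw1⟩, by rwa [Metric.mem_closedBall, dist_zero_right], rfl⟩
    rw [himg]
    exact hS1comp
  have hfd : FiniteDimensional ℂ Ec :=
    FiniteDimensional.of_isCompact_closedBall₀ ℂ one_pos hballEc
  have hvEc : v ∈ Ec := (hmemEc v).2 hAv
  have hnt : Nontrivial Ec := by
    refine nontrivial_of_ne ⟨v, hvEc⟩ 0 ?_
    intro hh
    exact hv0 (by simpa using congrArg Subtype.val hh)
  have hVEc : ∀ w ∈ Ec, V w ∈ Ec := by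
    intro w hw
    rw [hmemEc]
    have h1 : A (V w) = V (A w) := by
      have := congrArg (fun T : H →L[ℂ] H => T w) hAcomm.symm
      simpa only [ContinuousLinearMap.mul_apply] using this
    rw [h1, (hmemEc w).1 hw, map_smul]
  set g : Module.End ℂ Ec := LinearMap.restrict (V : H →ₗ[ℂ] H) hVEc with hg
  obtain ⟨μ, hμ⟩ := Module.End.exists_eigenvalue g
  obtain ⟨w0, hw0⟩ := hμ.exists_hasEigenvector
  have hgw0 : g w0 = μ • w0 := Module.End.mem_eigenspace_iff.1 hw0.1
  have hVw0 : V (w0 : H) = μ • (w0 : H) := by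
    have := congrArg Subtype.val hgw0
    rw [hg] at this
    simpa using this
  have hw0ne : (w0 : H) ≠ 0 := by
    intro h0
    exact hw0.2 (by exact Subtype.ext h0)
  have hw0E : (w0 : H) ∈ E := Submodule.subset_span ⟨μ, hw0ne, hVw0⟩
  have hw0W : (w0 : H) ∈ Eᗮ := by
    have h1 : A (w0 : H) = (c : ℂ) • (w0 : H) := (hmemEc _).1 w0.2
    have h2 : (w0 : H) = ((c : ℂ))⁻¹ • A (w0 : H) := by
      rw [h1, smul_smul, inv_mul_cancel₀ hc0', one_smul]
    rw [h2]
    exact Submodule.smul_mem _ _ (hrange _)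
  have hzero : ⟪(w0 : H), (w0 : H)⟫_ℂ = 0 :=
    (Submodule.mem_orthogonal E (w0 : H)).1 hw0W (w0 : H) hw0E
  exact hw0ne (inner_self_eq_zero.1 hzero)


end APAux

open Filter
open scoped InnerProductSpace

/-- A unitary `U` is almost periodic (every vector has relatively norm-compact orbit under the
powers `Uⁿ`, `n ∈ ℤ`) if and only if `H` is the closed linear span of the eigenvectors of `U`. -/
theorem almost_periodic_iff_span_eigenvectors
    {H : Type*} [NormedAddCommGroup H] [InnerProductSpace ℂ H] [CompleteSpace H]
    (U : unitary (H →L[ℂ] H)) :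
    (∀ x : H, IsCompact (closure {y : H | ∃ n : ℤ, y = ((U ^ n : unitary (H →L[ℂ] H)) : H →L[ℂ] H) x})) ↔
      (Submodule.span ℂ {x : H | ∃ z : ℂ, x ≠ 0 ∧ (U : H →L[ℂ] H) x = z • x}).topologicalClosure = ⊤ := by
  constructor
  · intro h
    exact APAux.forward U h
  · intro hspan x
    exact APAux.backward U hspan x
end

section
/- Let U be a unitary on H, and for each eigenvalue z of U let E_z denote the orthogonal projection onto the corresponding eigenspace. For any bounded operator A on H, the net of finite partial sums ∑_{z ∈ F} E_z A E_z, indexed by finite subsets F of the point spectrum of U, converges in the strong operator topology. -/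
open Filter Finset
open scoped InnerProductSpace

private lemma norm_sum_sq_of_orthogonal {H : Type*} [NormedAddCommGroup H]
    [InnerProductSpace ℂ H] {ι : Type*} (t : Finset ι) (v : ι → H)
    (h : ∀ i ∈ t, ∀ j ∈ t, i ≠ j → ⟪v i, v j⟫_ℂ = 0) :
    ‖∑ i ∈ t, v i‖ ^ 2 = ∑ i ∈ t, ‖v i‖ ^ 2 := by
  have key : ⟪∑ i ∈ t, v i, ∑ j ∈ t, v j⟫_ℂ = ∑ i ∈ t, ⟪v i, v i⟫_ℂ := by
    rw [sum_inner]
    refine Finset.sum_congr rfl fun i hi => ?_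
    rw [inner_sum]
    exact Finset.sum_eq_single_of_mem i hi fun j hj hij => h i hi j hj (Ne.symm hij)
  have h2 := congrArg (RCLike.re (K := ℂ)) key
  rw [map_sum] at h2
  rw [norm_sq_eq_re_inner (𝕜 := ℂ), h2]
  exact Finset.sum_congr rfl fun i _ => (norm_sq_eq_re_inner (𝕜 := ℂ) (v i)).symm

/-- For a unitary `U` with eigenprojections `E_z` (the orthogonal projection onto
`ker (U - z·I)`) and any bounded operator `A`, the net of finite partial sums
`∑_{z ∈ F} E_z A E_z`, over finite subsets `F` of the point spectrum of `U`, converges in the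
strong operator topology. -/
theorem partial_sums_eigenprojection_compress_converge
    {H : Type*} [NormedAddCommGroup H] [InnerProductSpace ℂ H] [CompleteSpace H]
    (U : unitary (H →L[ℂ] H)) (E : ℂ → (H →L[ℂ] H))
    (hE : ∀ z : ℂ, ∀ x : H,
      E z x ∈ LinearMap.ker (((U : H →L[ℂ] H) - z • (1 : H →L[ℂ] H) : H →L[ℂ] H) : H →ₗ[ℂ] H) ∧
      x - E z x ∈ (LinearMap.ker (((U : H →L[ℂ] H) - z • (1 : H →L[ℂ] H) : H →L[ℂ] H) : H →ₗ[ℂ] H))ᗮ)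
    (A : H →L[ℂ] H) :
    ∀ x : H, ∃ L : H,
      Tendsto
        (fun F : Finset {z : ℂ // ∃ v : H, v ≠ 0 ∧ (U : H →L[ℂ] H) v = z • v} =>
          ∑ z ∈ F, E (z : ℂ) (A (E (z : ℂ) x)))
        atTop (nhds L) := by
  intro x
  set U' := (U : H →L[ℂ] H) with hU'
  -- membership in the kernel means being an eigenvector
  have hker : ∀ (z : ℂ) (u : H),
      u ∈ LinearMap.ker ((U' - z • (1 : H →L[ℂ] H) : H →L[ℂ] H) : H →ₗ[ℂ] H) ↔ U' u = z • u := by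
    intro z u
    simp [LinearMap.mem_ker, sub_eq_zero]
  -- U preserves inner products
  have hinner : ∀ a b : H, ⟪U' a, U' b⟫_ℂ = ⟪a, b⟫_ℂ := by
    intro a b
    have h1 : star U' * U' = 1 := Unitary.star_mul_self_of_mem U.prop
    rw [ContinuousLinearMap.star_eq_adjoint] at h1
    calc ⟪U' a, U' b⟫_ℂ = ⟪a, (ContinuousLinearMap.adjoint U') (U' b)⟫_ℂ :=
          (ContinuousLinearMap.adjoint_inner_right U' a (U' b)).symm
      _ = ⟪a, (ContinuousLinearMap.adjoint U' * U') b⟫_ℂ := rfl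
      _ = ⟪a, b⟫_ℂ := by rw [h1]; simp
  -- eigenvalues of U have modulus 1
  have hmod : ∀ z : {z : ℂ // ∃ v : H, v ≠ 0 ∧ U' v = z • v}, ‖(z : ℂ)‖ = 1 := by
    rintro ⟨z, v, hv0, hv⟩
    have h1 : ⟪U' v, U' v⟫_ℂ = ⟪v, v⟫_ℂ := hinner v v
    rw [hv, inner_smul_left, inner_smul_right] at h1
    have hvv : ⟪v, v⟫_ℂ ≠ 0 := inner_self_ne_zero.mpr hv0
    have h2 : ((starRingEnd ℂ) z * z - 1) * ⟪v, v⟫_ℂ = 0 := by linear_combination h1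
    have h2' : (starRingEnd ℂ) z * z = 1 :=
      sub_eq_zero.mp ((mul_eq_zero.mp h2).resolve_right hvv)
    have h3 : Complex.normSq z = 1 := by
      rw [mul_comm, Complex.mul_conj] at h2'
      exact_mod_cast h2'
    have : ‖z‖ ^ 2 = 1 := by rw [Complex.sq_norm]; exact h3
    nlinarith [norm_nonneg z, this]
  -- eigenvectors for distinct eigenvalues are orthogonal
  have horth : ∀ z w : {z : ℂ // ∃ v : H, v ≠ 0 ∧ U' v = z • v}, z ≠ w →
      ∀ u v : H, U' u = (z : ℂ) • u → U' v = (w : ℂ) • v → ⟪u, v⟫_ℂ = 0 := by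
    intro z w hzw u v hu hv
    have h1 : ⟪U' u, U' v⟫_ℂ = ⟪u, v⟫_ℂ := hinner u v
    rw [hu, hv, inner_smul_left, inner_smul_right, ← mul_assoc] at h1
    by_contra hne
    have h2a : ((starRingEnd ℂ) (z : ℂ) * (w : ℂ) - 1) * ⟪u, v⟫_ℂ = 0 := by
      linear_combination h1
    have h2 : (starRingEnd ℂ) (z : ℂ) * (w : ℂ) = 1 :=
      sub_eq_zero.mp ((mul_eq_zero.mp h2a).resolve_right hne)
    have h3 : (starRingEnd ℂ) (z : ℂ) * (z : ℂ) = 1 := by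
      rw [mul_comm, Complex.mul_conj]
      have h := hmod z
      have : Complex.normSq (z : ℂ) = 1 := by
        rw [← Complex.sq_norm, h]; norm_num
      rw [this]; norm_num
    have hz0 : (starRingEnd ℂ) (z : ℂ) ≠ 0 := by
      intro h
      rw [h, zero_mul] at h3
      exact zero_ne_one h3
    have : (w : ℂ) = (z : ℂ) := mul_left_cancel₀ hz0 (by rw [h2, h3])
    exact hzw (Subtype.ext this.symm)
  -- basic properties of E
  have hEeig : ∀ (z : ℂ) (w : H), U' (E z w) = z • E z w := fun z w =>
    (hker z (E z w)).mp (hE z w).1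
  have hEinner : ∀ (z : ℂ) (w : H), ⟪E z w, w - E z w⟫_ℂ = 0 := fun z w =>
    Submodule.inner_right_of_mem_orthogonal (hE z w).1 (hE z w).2
  have hEcontr : ∀ (z : ℂ) (w : H), ‖E z w‖ ≤ ‖w‖ := by
    intro z w
    have hdec : w = E z w + (w - E z w) := by abel
    have h1 : ‖w‖ ^ 2 = ‖E z w‖ ^ 2 + ‖w - E z w‖ ^ 2 := by
      conv_lhs => rw [hdec]
      rw [norm_add_sq (𝕜 := ℂ), hEinner z w]
      simp
    nlinarith [norm_nonneg (E z w), norm_nonneg w, sq_nonneg (‖w - E z w‖)]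
  have hExx : ∀ (z : ℂ) (w : H), ⟪E z w, w⟫_ℂ = (‖E z w‖ : ℂ) ^ 2 := by
    intro z w
    have : ⟪E z w, w⟫_ℂ = ⟪E z w, E z w⟫_ℂ + ⟪E z w, w - E z w⟫_ℂ := by
      rw [← inner_add_right]; congr 1; abel
    rw [this, hEinner z w, add_zero, inner_self_eq_norm_sq_to_K]
    norm_num
  -- Bessel inequality for finite sums
  set S := {z : ℂ // ∃ v : H, v ≠ 0 ∧ U' v = z • v}
  have hpairwise : ∀ (y : H) (t : Finset S), ∀ i ∈ t, ∀ j ∈ t, i ≠ j →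
      ⟪E (i : ℂ) y, E (j : ℂ) y⟫_ℂ = 0 := fun y t i _ j _ hij =>
    horth i j hij _ _ (hEeig _ y) (hEeig _ y)
  have hbessel : ∀ t : Finset S, ∑ z ∈ t, ‖E (z : ℂ) x‖ ^ 2 ≤ ‖x‖ ^ 2 := by
    intro t
    set y := ∑ z ∈ t, E (z : ℂ) x with hy
    have h1 : ‖y‖ ^ 2 = ∑ z ∈ t, ‖E (z : ℂ) x‖ ^ 2 :=
      norm_sum_sq_of_orthogonal t _ (hpairwise x t)
    have h2 : ⟪y, x⟫_ℂ = ∑ z ∈ t, (‖E (z : ℂ) x‖ : ℂ) ^ 2 := by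
      rw [hy, sum_inner]
      exact Finset.sum_congr rfl fun z _ => hExx _ x
    have h3 : RCLike.re (K := ℂ) ⟪y, x⟫_ℂ = ∑ z ∈ t, ‖E (z : ℂ) x‖ ^ 2 := by
      rw [h2, map_sum]
      simp [← Complex.ofReal_pow]
    have h4 : RCLike.re (K := ℂ) ⟪y, x⟫_ℂ ≤ ‖y‖ * ‖x‖ := by
      calc RCLike.re (K := ℂ) ⟪y, x⟫_ℂ ≤ ‖⟪y, x⟫_ℂ‖ := RCLike.re_le_norm _
        _ ≤ ‖y‖ * ‖x‖ := norm_inner_le_norm y x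
    rw [h3] at h4
    rw [← h1] at h4 ⊢
    nlinarith [norm_nonneg y, norm_nonneg x, sq_nonneg (‖y‖ - ‖x‖)]
  -- summability of the squared norms
  have hg : Summable fun z : S => ‖E (z : ℂ) x‖ ^ 2 :=
    summable_of_sum_le (fun z => sq_nonneg _) hbessel
  -- the main family
  set f : S → H := fun z => E (z : ℂ) (A (E (z : ℂ) x)) with hf
  have hfbound : ∀ z : S, ‖f z‖ ^ 2 ≤ (‖A‖ + 1) ^ 2 * ‖E (z : ℂ) x‖ ^ 2 := by
    intro z
    have h1 : ‖f z‖ ≤ (‖A‖ + 1) * ‖E (z : ℂ) x‖ := by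
      calc ‖f z‖ ≤ ‖A (E (z : ℂ) x)‖ := hEcontr _ _
        _ ≤ ‖A‖ * ‖E (z : ℂ) x‖ := A.le_opNorm _
        _ ≤ (‖A‖ + 1) * ‖E (z : ℂ) x‖ := by
            apply mul_le_mul_of_nonneg_right (by linarith) (norm_nonneg _)
    nlinarith [norm_nonneg (f z), norm_nonneg (E (z : ℂ) x), mul_nonneg (norm_nonneg A) (norm_nonneg (E (z:ℂ) x))]
  have hforth : ∀ (t : Finset S), ∀ i ∈ t, ∀ j ∈ t, i ≠ j → ⟪f i, f j⟫_ℂ = 0 :=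
    fun t i _ j _ hij => horth i j hij _ _ (hEeig _ _) (hEeig _ _)
  -- summability of f via vanishing norms
  have hsum : Summable f := by
    rw [summable_iff_vanishing_norm]
    intro ε hε
    have hA1 : (0 : ℝ) < ‖A‖ + 1 := by positivity
    have hδ : (0 : ℝ) < (ε / (‖A‖ + 1)) ^ 2 := by positivity
    obtain ⟨s, hs⟩ := summable_iff_vanishing_norm.mp hg ((ε / (‖A‖ + 1)) ^ 2) hδ
    refine ⟨s, fun t hts => ?_⟩
    have h1 : ‖∑ z ∈ t, f z‖ ^ 2 = ∑ z ∈ t, ‖f z‖ ^ 2 :=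
      norm_sum_sq_of_orthogonal t f (hforth t)
    have h2 : ∑ z ∈ t, ‖f z‖ ^ 2 ≤ (‖A‖ + 1) ^ 2 * ∑ z ∈ t, ‖E (z : ℂ) x‖ ^ 2 := by
      rw [Finset.mul_sum]
      exact Finset.sum_le_sum fun z _ => hfbound z
    have h3 : ∑ z ∈ t, ‖E (z : ℂ) x‖ ^ 2 < (ε / (‖A‖ + 1)) ^ 2 := by
      have := hs t hts
      calc ∑ z ∈ t, ‖E (z : ℂ) x‖ ^ 2 ≤ ‖∑ z ∈ t, ‖E (z : ℂ) x‖ ^ 2‖ := le_abs_self _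
        _ < _ := this
    have h4 : ‖∑ z ∈ t, f z‖ ^ 2 < ε ^ 2 := by
      calc ‖∑ z ∈ t, f z‖ ^ 2 = ∑ z ∈ t, ‖f z‖ ^ 2 := h1
        _ ≤ (‖A‖ + 1) ^ 2 * ∑ z ∈ t, ‖E (z : ℂ) x‖ ^ 2 := h2
        _ < (‖A‖ + 1) ^ 2 * (ε / (‖A‖ + 1)) ^ 2 := by
            apply mul_lt_mul_of_pos_left h3 (by positivity)
        _ = ε ^ 2 := by field_simp
    nlinarith [norm_nonneg (∑ z ∈ t, f z)]
  exact ⟨∑' z, f z, hsum.hasSum⟩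
end

section
/- Let U be a unitary on H and ℰ(A) = ∑_{z ∈ σ_pp(U)} E_z A E_z. If A is a compact operator on H, then ℰ(A) is compact. -/
open Filter Finset
open scoped InnerProductSpace

private lemma aux_le_of_sq_le_mul {a b : ℝ} (ha : 0 ≤ a) (hb : 0 ≤ b) (h : a ^ 2 ≤ a * b) :
    a ≤ b := by nlinarith

private lemma aux_le_of_sq_le_sq {a b : ℝ} (ha : 0 ≤ a) (hb : 0 ≤ b) (h : a ^ 2 ≤ b ^ 2) :
    a ≤ b := by nlinarith

private lemma aux_inner_map_map {H : Type*} [NormedAddCommGroup H] [InnerProductSpace ℂ H]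
    [CompleteSpace H] (U : unitary (H →L[ℂ] H)) (a b : H) :
    ⟪(U : H →L[ℂ] H) a, (U : H →L[ℂ] H) b⟫_ℂ = ⟪a, b⟫_ℂ := by
  rw [← ContinuousLinearMap.adjoint_inner_right, ← ContinuousLinearMap.mul_apply,
    ← ContinuousLinearMap.star_eq_adjoint, Unitary.coe_star_mul_self,
    ContinuousLinearMap.one_apply]

private lemma aux_eig_orth {H : Type*} [NormedAddCommGroup H] [InnerProductSpace ℂ H]
    [CompleteSpace H] (U : unitary (H →L[ℂ] H)) {z w : ℂ}
    (hz : ∃ v : H, v ≠ 0 ∧ (U : H →L[ℂ] H) v = z • v) (hzw : z ≠ w) {u v : H}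
    (hu : (U : H →L[ℂ] H) u = z • u) (hv : (U : H →L[ℂ] H) v = w • v) :
    ⟪u, v⟫_ℂ = 0 := by
  obtain ⟨v₀, hv₀, hUv₀⟩ := hz
  have hz1 : (starRingEnd ℂ) z * z = 1 := by
    have h0 := aux_inner_map_map U v₀ v₀
    rw [hUv₀, inner_smul_left, inner_smul_right] at h0
    have h1 : ⟪v₀, v₀⟫_ℂ ≠ 0 := inner_self_ne_zero.mpr hv₀
    have h0' : (starRingEnd ℂ) z * z * ⟪v₀, v₀⟫_ℂ = 1 * ⟪v₀, v₀⟫_ℂ := by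
      rw [mul_assoc, one_mul]; exact h0
    exact mul_right_cancel₀ h1 h0'
  by_contra h
  have h0 := aux_inner_map_map U u v
  rw [hu, hv, inner_smul_left, inner_smul_right] at h0
  have h2 : (starRingEnd ℂ) z * w = 1 := by
    have h0' : (starRingEnd ℂ) z * w * ⟪u, v⟫_ℂ = 1 * ⟪u, v⟫_ℂ := by
      rw [mul_assoc, one_mul]; exact h0
    exact mul_right_cancel₀ h h0'
  have hzc : (starRingEnd ℂ) z ≠ 0 := by
    intro hc; rw [hc, zero_mul] at hz1; exact zero_ne_one hz1
  exact hzw (mul_left_cancel₀ hzc (hz1.trans h2.symm))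

private lemma aux_finite_rank_approx {H : Type*} [NormedAddCommGroup H]
    [InnerProductSpace ℂ H] [CompleteSpace H] (A : H →L[ℂ] H) (hA : IsCompactOperator A)
    {ε : ℝ} (hε : 0 < ε) :
    ∃ (n : ℕ) (u v : Fin n → H), ∀ x : H, ‖A x - ∑ i, ⟪v i, x⟫_ℂ • u i‖ ≤ ε * ‖x‖ := by
  obtain ⟨K0, hK0, hnhds⟩ := hA
  obtain ⟨r, hr, hball⟩ := Metric.mem_nhds_iff.mp hnhds
  obtain ⟨t, htf, htc⟩ := (Metric.totallyBounded_iff.mp hK0.totallyBounded) (ε * r / 2)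
    (by positivity)
  let S := Submodule.span ℂ t
  haveI : FiniteDimensional ℂ S := FiniteDimensional.span_of_finite ℂ htf
  have hproj : ∀ x : H, ‖x‖ < r → ‖A x - (S.orthogonalProjectionOnto (A x) : H)‖ ≤ ε * r / 2 := by
    intro x hx
    have hAx : A x ∈ K0 := hball (by simpa [Metric.mem_ball, dist_zero_right] using hx)
    obtain ⟨y, hy, hxy⟩ := Set.mem_iUnion₂.mp (htc hAx)
    rw [Submodule.coe_orthogonalProjectionOnto_apply, Submodule.starProjection_minimal]
    refine le_trans (ciInf_le ⟨0, ?_⟩ (⟨y, Submodule.subset_span hy⟩ : S)) ?_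
    · rintro _ ⟨w, rfl⟩; exact norm_nonneg _
    · exact le_of_lt (by simpa [dist_eq_norm] using hxy)
  have hmain : ∀ x : H, ‖A x - (S.orthogonalProjectionOnto (A x) : H)‖ ≤ ε * ‖x‖ := by
    intro x
    rcases eq_or_ne x 0 with rfl | hx0
    · simp
    · have hxpos : (0 : ℝ) < ‖x‖ := norm_pos_iff.mpr hx0
      set c : ℂ := ((r / (2 * ‖x‖) : ℝ) : ℂ) with hc
      have hcpos : (0 : ℝ) < r / (2 * ‖x‖) := by positivity
      have hcx : ‖c • x‖ = r / 2 := by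
        rw [norm_smul, hc, Complex.norm_real, Real.norm_of_nonneg hcpos.le]
        field_simp
      have h1 := hproj (c • x) (by rw [hcx]; linarith)
      have h2 : A (c • x) - (S.orthogonalProjectionOnto (A (c • x)) : H)
          = c • (A x - (S.orthogonalProjectionOnto (A x) : H)) := by
        rw [map_smul, map_smul, smul_sub]
        norm_cast
      rw [h2, norm_smul, hc, Complex.norm_real, Real.norm_of_nonneg hcpos.le] at h1
      rw [div_mul_eq_mul_div, div_le_div_iff₀ (by positivity) (by norm_num)] at h1
      set d := ‖A x - (S.orthogonalProjectionOnto (A x) : H)‖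
      have : r * d ≤ ε * r * ‖x‖ := by nlinarith
      nlinarith
  refine ⟨Module.finrank ℂ S, fun i => ((stdOrthonormalBasis ℂ S) i : H),
    fun i => ContinuousLinearMap.adjoint A ((stdOrthonormalBasis ℂ S) i : H), fun x => ?_⟩
  have hsum : ((S.orthogonalProjectionOnto (A x) : S) : H)
      = ∑ i, ⟪ContinuousLinearMap.adjoint A ((stdOrthonormalBasis ℂ S) i : H), x⟫_ℂ
          • ((stdOrthonormalBasis ℂ S) i : H) := by
    rw [(stdOrthonormalBasis ℂ S).orthogonalProjectionOnto_apply_eq_sum]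
    push_cast
    refine Finset.sum_congr rfl fun i _ => ?_
    rw [ContinuousLinearMap.adjoint_inner_left]
  rw [← hsum]
  exact hmain x

/-- If `A` is a compact operator, then `ℰ(A) = ∑_{z ∈ σ_pp(U)} E_z A E_z` (the strong-operator
limit of the finite partial sums) is a compact operator. -/
theorem eigen_compression_compact
    {H : Type*} [NormedAddCommGroup H] [InnerProductSpace ℂ H] [CompleteSpace H]
    (U : unitary (H →L[ℂ] H)) (E : ℂ → (H →L[ℂ] H))
    (hE : ∀ z : ℂ, ∀ x : H,
      E z x ∈ LinearMap.ker (((U : H →L[ℂ] H) - z • (1 : H →L[ℂ] H) : H →L[ℂ] H) : H →ₗ[ℂ] H) ∧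
      x - E z x ∈ (LinearMap.ker (((U : H →L[ℂ] H) - z • (1 : H →L[ℂ] H) : H →L[ℂ] H) : H →ₗ[ℂ] H))ᗮ)
    (A : H →L[ℂ] H) (hA : IsCompactOperator A)
    (EA : H →L[ℂ] H)
    (hEA : ∀ x : H,
      Tendsto
        (fun F : Finset {z : ℂ // ∃ v : H, v ≠ 0 ∧ (U : H →L[ℂ] H) v = z • v} =>
          ∑ z ∈ F, E (z : ℂ) (A (E (z : ℂ) x)))
        atTop (nhds (EA x))) :
    IsCompactOperator EA := by
  classical
  -- basic facts about the projections `E z`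
  have hKmem : ∀ (z : ℂ) (x : H),
      E z x ∈ LinearMap.ker (((U : H →L[ℂ] H) - z • (1 : H →L[ℂ] H) : H →L[ℂ] H) : H →ₗ[ℂ] H) := fun z x => (hE z x).1
  have hker : ∀ (z : ℂ) (u : H),
      u ∈ LinearMap.ker (((U : H →L[ℂ] H) - z • (1 : H →L[ℂ] H) : H →L[ℂ] H) : H →ₗ[ℂ] H) →
      (U : H →L[ℂ] H) u = z • u := by
    intro z u hu
    rw [LinearMap.mem_ker] at hu
    have hu' : (U : H →L[ℂ] H) u - z • u = 0 := by
      simpa [ContinuousLinearMap.sub_apply, ContinuousLinearMap.smul_apply,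
        ContinuousLinearMap.one_apply] using hu
    exact sub_eq_zero.mp hu'
  have hinner1 : ∀ (z : ℂ) (x y : H), ⟪E z x, y⟫_ℂ = ⟪E z x, E z y⟫_ℂ := by
    intro z x y
    have h := (Submodule.mem_orthogonal _ _).mp (hE z y).2 (E z x) (hKmem z x)
    rw [inner_sub_right, sub_eq_zero] at h
    exact h
  have hinner2 : ∀ (z : ℂ) (x y : H), ⟪x, E z y⟫_ℂ = ⟪E z x, E z y⟫_ℂ := by
    intro z x y
    have h := (Submodule.mem_orthogonal' _ _).mp (hE z x).2 (E z y) (hKmem z y)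
    rw [inner_sub_left, sub_eq_zero] at h
    exact h
  have hEnorm : ∀ (z : ℂ) (x : H), ‖E z x‖ ≤ ‖x‖ := by
    intro z x
    have h : (‖E z x‖ : ℝ) ^ 2 ≤ ‖E z x‖ * ‖x‖ := by
      have h1 : ⟪E z x, x⟫_ℂ = (‖E z x‖ : ℂ) ^ 2 :=
        (hinner1 z x x).trans (inner_self_eq_norm_sq_to_K _)
      have h2 := norm_inner_le_norm (𝕜 := ℂ) (E z x) x
      rw [h1] at h2
      calc (‖E z x‖ : ℝ) ^ 2 = ‖(‖E z x‖ : ℂ) ^ 2‖ := by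
            rw [norm_pow, Complex.norm_real, Real.norm_of_nonneg (norm_nonneg _)]
        _ ≤ ‖E z x‖ * ‖x‖ := h2
    exact aux_le_of_sq_le_mul (norm_nonneg _) (norm_nonneg _) h
  -- orthogonality of distinct eigenspaces
  have horthZ : ∀ z w : {z : ℂ // ∃ v : H, v ≠ 0 ∧ (U : H →L[ℂ] H) v = z • v}, z ≠ w →
      ∀ u v : H, u ∈ LinearMap.ker (((U : H →L[ℂ] H) - (z : ℂ) • (1 : H →L[ℂ] H) : H →L[ℂ] H) : H →ₗ[ℂ] H) →
      v ∈ LinearMap.ker (((U : H →L[ℂ] H) - (w : ℂ) • (1 : H →L[ℂ] H) : H →L[ℂ] H) : H →ₗ[ℂ] H) → ⟪u, v⟫_ℂ = 0 := by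
    intro z w hzw u v hu hv
    exact aux_eig_orth U z.2 (fun h => hzw (Subtype.ext h)) (hker _ u hu) (hker _ v hv)
  -- Pythagoras
  have hpyth : ∀ (F : Finset {z : ℂ // ∃ v : H, v ≠ 0 ∧ (U : H →L[ℂ] H) v = z • v})
      (v : {z : ℂ // ∃ v : H, v ≠ 0 ∧ (U : H →L[ℂ] H) v = z • v} → H),
      (∀ z : {z : ℂ // ∃ v : H, v ≠ 0 ∧ (U : H →L[ℂ] H) v = z • v},
        v z ∈ LinearMap.ker (((U : H →L[ℂ] H) - (z : ℂ) • (1 : H →L[ℂ] H) : H →L[ℂ] H) : H →ₗ[ℂ] H)) →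
      ‖∑ z ∈ F, v z‖ ^ 2 = ∑ z ∈ F, ‖v z‖ ^ 2 := by
    intro F v hv
    have hfam : OrthogonalFamily ℂ
        (fun z : {z : ℂ // ∃ v : H, v ≠ 0 ∧ (U : H →L[ℂ] H) v = z • v} =>
          LinearMap.ker (((U : H →L[ℂ] H) - (z : ℂ) • (1 : H →L[ℂ] H) : H →L[ℂ] H) : H →ₗ[ℂ] H))
        (fun z => (LinearMap.ker (((U : H →L[ℂ] H) - (z : ℂ) • (1 : H →L[ℂ] H) : H →L[ℂ] H) : H →ₗ[ℂ] H)).subtypeₗᵢ) :=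
      fun z w hzw a b => horthZ z w hzw a b a.2 b.2
    have h := hfam.norm_sum (fun z => ⟨v z, hv z⟩) F
    exact h
  -- Bessel inequality
  have hbessel : ∀ (F : Finset {z : ℂ // ∃ v : H, v ≠ 0 ∧ (U : H →L[ℂ] H) v = z • v}) (x : H),
      ∑ z ∈ F, ‖E (z : ℂ) x‖ ^ 2 ≤ ‖x‖ ^ 2 := by
    intro F x
    set s := ∑ z ∈ F, ‖E (z : ℂ) x‖ ^ 2 with hs
    have hs0 : 0 ≤ s := Finset.sum_nonneg fun _ _ => sq_nonneg _
    have hy : ‖∑ z ∈ F, E (z : ℂ) x‖ ^ 2 = s := hpyth F _ (fun z => hKmem _ x)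
    have hyx : ⟪∑ z ∈ F, E (z : ℂ) x, x⟫_ℂ = (s : ℂ) := by
      rw [sum_inner, hs]
      push_cast
      refine Finset.sum_congr rfl fun z _ => ?_
      rw [hinner1, inner_self_eq_norm_sq_to_K]
      norm_cast
    have hle : s ≤ Real.sqrt s * ‖x‖ := by
      have h2 := norm_inner_le_norm (𝕜 := ℂ) (∑ z ∈ F, E (z : ℂ) x) x
      rw [hyx, Complex.norm_real, Real.norm_of_nonneg hs0] at h2
      have h3 : ‖∑ z ∈ F, E (z : ℂ) x‖ = Real.sqrt s := by
        rw [← hy, Real.sqrt_sq (norm_nonneg _)]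
      rw [h3] at h2
      exact h2
    have h4 := aux_le_of_sq_le_mul (Real.sqrt_nonneg s) (norm_nonneg x)
      (by rw [Real.sq_sqrt hs0]; exact hle)
    calc s = Real.sqrt s ^ 2 := (Real.sq_sqrt hs0).symm
      _ ≤ ‖x‖ ^ 2 := pow_le_pow_left₀ (Real.sqrt_nonneg s) h4 2
  -- contraction property of compressions
  have hcontr : ∀ (f : H → H) (c : ℝ), 0 ≤ c → (∀ y, ‖f y‖ ≤ c * ‖y‖) →
      ∀ (F : Finset {z : ℂ // ∃ v : H, v ≠ 0 ∧ (U : H →L[ℂ] H) v = z • v}) (x : H),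
      ‖∑ z ∈ F, E (z : ℂ) (f (E (z : ℂ) x))‖ ≤ c * ‖x‖ := by
    intro f c hc hf F x
    have h1 : ‖∑ z ∈ F, E (z : ℂ) (f (E (z : ℂ) x))‖ ^ 2
        = ∑ z ∈ F, ‖E (z : ℂ) (f (E (z : ℂ) x))‖ ^ 2 := hpyth F _ (fun z => hKmem _ _)
    have h2 : ∑ z ∈ F, ‖E (z : ℂ) (f (E (z : ℂ) x))‖ ^ 2
        ≤ c ^ 2 * ∑ z ∈ F, ‖E (z : ℂ) x‖ ^ 2 := by
      rw [Finset.mul_sum]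
      refine Finset.sum_le_sum fun z _ => ?_
      have h3 : ‖E (z : ℂ) (f (E (z : ℂ) x))‖ ≤ c * ‖E (z : ℂ) x‖ :=
        le_trans (hEnorm _ _) (hf _)
      calc ‖E (z : ℂ) (f (E (z : ℂ) x))‖ ^ 2 ≤ (c * ‖E (z : ℂ) x‖) ^ 2 :=
            pow_le_pow_left₀ (norm_nonneg _) h3 2
        _ = c ^ 2 * ‖E (z : ℂ) x‖ ^ 2 := by ring
    refine aux_le_of_sq_le_sq (norm_nonneg _) (by positivity) ?_
    rw [h1]
    calc ∑ z ∈ F, ‖E (z : ℂ) (f (E (z : ℂ) x))‖ ^ 2 ≤ c ^ 2 * ∑ z ∈ F, ‖E (z : ℂ) x‖ ^ 2 := h2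
      _ ≤ c ^ 2 * ‖x‖ ^ 2 := mul_le_mul_of_nonneg_left (hbessel F x) (by positivity)
      _ = (c * ‖x‖) ^ 2 := by ring
  -- summability of ‖E z u‖²
  have htail : ∀ (u : H) (δ : ℝ), 0 < δ →
      ∃ F₀ : Finset {z : ℂ // ∃ v : H, v ≠ 0 ∧ (U : H →L[ℂ] H) v = z • v},
      ∀ T, Disjoint T F₀ → ∑ z ∈ T, ‖E (z : ℂ) u‖ ^ 2 < δ := by
    intro u δ hδ
    have hsum : Summable (fun z : {z : ℂ // ∃ v : H, v ≠ 0 ∧ (U : H →L[ℂ] H) v = z • v} =>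
        ‖E (z : ℂ) u‖ ^ 2) :=
      summable_of_sum_le (fun z => sq_nonneg _) (fun F => hbessel F u)
    obtain ⟨F₀, hF₀⟩ := summable_iff_vanishing_norm.mp hsum δ hδ
    refine ⟨F₀, fun T hT => lt_of_le_of_lt (le_abs_self _) ?_⟩
    simpa [Real.norm_eq_abs] using hF₀ T hT
  -- tail bound for rank-one pieces
  have hrank : ∀ (u v x : H) (T : Finset {z : ℂ // ∃ v : H, v ≠ 0 ∧ (U : H →L[ℂ] H) v = z • v}),
      ‖∑ z ∈ T, ⟪E (z : ℂ) v, x⟫_ℂ • E (z : ℂ) u‖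
        ≤ ‖v‖ * ‖x‖ * Real.sqrt (∑ z ∈ T, ‖E (z : ℂ) u‖ ^ 2) := by
    intro u v x T
    set S := ∑ z ∈ T, ‖E (z : ℂ) u‖ ^ 2 with hS
    have hS0 : 0 ≤ S := Finset.sum_nonneg fun _ _ => sq_nonneg _
    have h1 : ‖∑ z ∈ T, ⟪E (z : ℂ) v, x⟫_ℂ • E (z : ℂ) u‖ ^ 2
        = ∑ z ∈ T, ‖⟪E (z : ℂ) v, x⟫_ℂ • E (z : ℂ) u‖ ^ 2 :=
      hpyth T _ (fun z => Submodule.smul_mem _ _ (hKmem _ _))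
    have h2 : ∑ z ∈ T, ‖⟪E (z : ℂ) v, x⟫_ℂ • E (z : ℂ) u‖ ^ 2
        ≤ (‖v‖ * ‖x‖) ^ 2 * S := by
      rw [hS, Finset.mul_sum]
      refine Finset.sum_le_sum fun z _ => ?_
      rw [norm_smul, mul_pow]
      have h3 : ‖⟪E (z : ℂ) v, x⟫_ℂ‖ ≤ ‖v‖ * ‖x‖ :=
        le_trans (norm_inner_le_norm _ _) (mul_le_mul_of_nonneg_right (hEnorm _ _) (norm_nonneg _))
      exact mul_le_mul_of_nonneg_right
        (pow_le_pow_left₀ (norm_nonneg _) h3 2) (sq_nonneg _)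
    refine aux_le_of_sq_le_sq (norm_nonneg _) (by positivity) ?_
    rw [h1]
    calc ∑ z ∈ T, ‖⟪E (z : ℂ) v, x⟫_ℂ • E (z : ℂ) u‖ ^ 2 ≤ (‖v‖ * ‖x‖) ^ 2 * S := h2
      _ = (‖v‖ * ‖x‖ * Real.sqrt S) ^ 2 := by
          rw [mul_pow (‖v‖ * ‖x‖) (Real.sqrt S), Real.sq_sqrt hS0]
  -- the finite partial-sum operators
  set TT : Finset {z : ℂ // ∃ v : H, v ≠ 0 ∧ (U : H →L[ℂ] H) v = z • v} → (H →L[ℂ] H) :=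
    fun F => ∑ z ∈ F, (E (z : ℂ)).comp (A.comp (E (z : ℂ))) with hTT
  have hTTapply : ∀ F, ∀ x : H, TT F x = ∑ z ∈ F, E (z : ℂ) (A (E (z : ℂ) x)) := by
    intro F x
    simp [hTT, ContinuousLinearMap.sum_apply]
  have hTTcompact : ∀ F, IsCompactOperator (TT F) := by
    intro F
    have h : IsCompactOperator fun x : H => ∑ z ∈ F, E (z : ℂ) (A (E (z : ℂ) x)) := by
      induction F using Finset.induction_on with
      | empty => simp only [Finset.sum_empty]; exact isCompactOperator_zero
      | @insert a F ha ih =>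
        have h1 : IsCompactOperator fun x : H => E (a : ℂ) (A (E (a : ℂ) x)) :=
          (hA.comp_clm (E (a : ℂ))).clm_comp (E (a : ℂ))
        have h2 := h1.add ih
        have h3 : (fun x : H => ∑ z ∈ insert a F, E (z : ℂ) (A (E (z : ℂ) x)))
            = fun x : H => E (a : ℂ) (A (E (a : ℂ) x)) + ∑ z ∈ F, E (z : ℂ) (A (E (z : ℂ) x)) := by
          funext x
          rw [Finset.sum_insert ha]
        rw [h3]
        exact h2
    have heq : ⇑(TT F) = fun x : H => ∑ z ∈ F, E (z : ℂ) (A (E (z : ℂ) x)) :=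
      funext (hTTapply F)
    show IsCompactOperator ⇑(TT F)
    rw [heq]
    exact h
  -- the key norm approximation
  have hkey : ∀ ε : ℝ, 0 < ε → ∃ F, ‖EA - TT F‖ ≤ ε := by
    intro ε hε
    obtain ⟨n, u, v, huv⟩ := aux_finite_rank_approx A hA (show (0:ℝ) < ε/3 by linarith)
    have hδ : ∀ i : Fin n, (0:ℝ) < (ε / (3 * (n + 1) * (‖v i‖ + 1))) ^ 2 := by
      intro i; positivity
    choose F₀ hF₀ using fun i : Fin n => htail (u i) _ (hδ i)
    set G₀ := Finset.univ.biUnion F₀ with hG₀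
    refine ⟨G₀, ?_⟩
    have hpt : ∀ x : H, ‖EA x - TT G₀ x‖ ≤ (2*ε/3) * ‖x‖ := by
      intro x
      have ht : Tendsto
          (fun F : Finset {z : ℂ // ∃ v : H, v ≠ 0 ∧ (U : H →L[ℂ] H) v = z • v} =>
            ‖(∑ z ∈ F, E (z : ℂ) (A (E (z : ℂ) x))) - TT G₀ x‖)
          atTop (nhds ‖EA x - TT G₀ x‖) :=
        ((hEA x).sub tendsto_const_nhds).norm
      refine le_of_tendsto ht ?_
      filter_upwards [Filter.eventually_ge_atTop G₀] with G hG
      have hsd : (∑ z ∈ G, E (z : ℂ) (A (E (z : ℂ) x))) - TT G₀ x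
          = ∑ z ∈ G \ G₀, E (z : ℂ) (A (E (z : ℂ) x)) := by
        rw [hTTapply, ← Finset.sum_sdiff hG, add_sub_cancel_right]
      rw [hsd]
      set D := G \ G₀ with hD
      have hDdisj : Disjoint D G₀ := Finset.sdiff_disjoint
      have hsplit : ∀ z : {z : ℂ // ∃ v : H, v ≠ 0 ∧ (U : H →L[ℂ] H) v = z • v},
          E (z : ℂ) (A (E (z : ℂ) x)) =
            E (z : ℂ) (A (E (z : ℂ) x) - ∑ i, ⟪v i, E (z : ℂ) x⟫_ℂ • u i)
            + ∑ i, ⟪E (z : ℂ) (v i), x⟫_ℂ • E (z : ℂ) (u i) := by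
        intro z
        have h4 : E (z : ℂ) (∑ i, ⟪v i, E (z : ℂ) x⟫_ℂ • u i)
            = ∑ i, ⟪E (z : ℂ) (v i), x⟫_ℂ • E (z : ℂ) (u i) := by
          rw [map_sum]
          refine Finset.sum_congr rfl fun i _ => ?_
          rw [map_smul]
          congr 1
          rw [hinner2 (z : ℂ) (v i) x, ← hinner1 (z : ℂ) (v i) x]
        rw [map_sub, h4]
        abel
      rw [Finset.sum_congr rfl (fun z _ => hsplit z), Finset.sum_add_distrib]
      refine le_trans (norm_add_le _ _) ?_
      have hb1 : ‖∑ z ∈ D, E (z : ℂ) (A (E (z : ℂ) x) - ∑ i, ⟪v i, E (z : ℂ) x⟫_ℂ • u i)‖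
          ≤ (ε/3) * ‖x‖ :=
        hcontr (fun y => A y - ∑ i, ⟪v i, y⟫_ℂ • u i) (ε/3) (by linarith) huv D x
      have hb2 : ‖∑ z ∈ D, ∑ i, ⟪E (z : ℂ) (v i), x⟫_ℂ • E (z : ℂ) (u i)‖ ≤ (ε/3) * ‖x‖ := by
        rw [Finset.sum_comm]
        refine le_trans (norm_sum_le _ _) ?_
        have heach : ∀ i : Fin n,
            ‖∑ z ∈ D, ⟪E (z : ℂ) (v i), x⟫_ℂ • E (z : ℂ) (u i)‖
              ≤ ε / (3 * (n + 1)) * ‖x‖ := by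
          intro i
          refine le_trans (hrank (u i) (v i) x D) ?_
          have htaili : ∑ z ∈ D, ‖E (z : ℂ) (u i)‖ ^ 2
              < (ε / (3 * (n + 1) * (‖v i‖ + 1))) ^ 2 :=
            hF₀ i D (hDdisj.mono_right (Finset.subset_biUnion_of_mem F₀ (Finset.mem_univ i)))
          have hsq : Real.sqrt (∑ z ∈ D, ‖E (z : ℂ) (u i)‖ ^ 2)
              ≤ ε / (3 * (n + 1) * (‖v i‖ + 1)) := by
            refine le_trans (Real.sqrt_le_sqrt htaili.le) ?_
            rw [Real.sqrt_sq (by positivity)]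
          have ha : (0:ℝ) ≤ ‖v i‖ := norm_nonneg _
          have h4 : ‖v i‖ * (ε / (3 * (n + 1) * (‖v i‖ + 1))) ≤ ε / (3 * (n + 1)) := by
            rw [mul_div_assoc'] at *
            rw [div_le_div_iff₀ (by positivity) (by positivity)]
            have hN : (0:ℝ) < 3 * ((n:ℝ) + 1) := by positivity
            nlinarith [hε.le, hN.le]
          calc ‖v i‖ * ‖x‖ * Real.sqrt (∑ z ∈ D, ‖E (z : ℂ) (u i)‖ ^ 2)
              ≤ ‖v i‖ * ‖x‖ * (ε / (3 * (n + 1) * (‖v i‖ + 1))) := by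
                refine mul_le_mul_of_nonneg_left hsq (by positivity)
            _ = (‖v i‖ * (ε / (3 * (n + 1) * (‖v i‖ + 1)))) * ‖x‖ := by ring
            _ ≤ ε / (3 * (n + 1)) * ‖x‖ :=
                mul_le_mul_of_nonneg_right h4 (norm_nonneg _)
        refine le_trans (Finset.sum_le_sum fun i _ => heach i) ?_
        rw [Finset.sum_const, Finset.card_univ, Fintype.card_fin, nsmul_eq_mul]
        have h5 : (n:ℝ) * (ε / (3 * (n + 1))) ≤ ε / 3 := by
          rw [mul_div_assoc', div_le_div_iff₀ (by positivity) (by norm_num)]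
          nlinarith [hε.le, Nat.cast_nonneg (α := ℝ) n]
        calc (n:ℝ) * (ε / (3 * (n + 1)) * ‖x‖) = ((n:ℝ) * (ε / (3 * (n + 1)))) * ‖x‖ := by ring
          _ ≤ ε / 3 * ‖x‖ := mul_le_mul_of_nonneg_right h5 (norm_nonneg _)
          _ = (ε/3) * ‖x‖ := by ring
      calc ‖∑ z ∈ D, E (z : ℂ) (A (E (z : ℂ) x) - ∑ i, ⟪v i, E (z : ℂ) x⟫_ℂ • u i)‖
            + ‖∑ z ∈ D, ∑ i, ⟪E (z : ℂ) (v i), x⟫_ℂ • E (z : ℂ) (u i)‖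
          ≤ (ε/3) * ‖x‖ + (ε/3) * ‖x‖ := add_le_add hb1 hb2
        _ = (2*ε/3) * ‖x‖ := by ring
    refine ContinuousLinearMap.opNorm_le_bound _ hε.le fun x => ?_
    calc ‖(EA - TT G₀) x‖ = ‖EA x - TT G₀ x‖ := by rw [ContinuousLinearMap.sub_apply]
      _ ≤ (2*ε/3) * ‖x‖ := hpt x
      _ ≤ ε * ‖x‖ := by nlinarith [norm_nonneg x]
  -- conclude by closedness of the set of compact operators
  have hmem : EA ∈ closure {f : H →L[ℂ] H | IsCompactOperator f} := by
    rw [Metric.mem_closure_iff]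
    intro ε hε
    obtain ⟨F, hF⟩ := hkey (ε/2) (by linarith)
    refine ⟨TT F, hTTcompact F, ?_⟩
    rw [dist_eq_norm]
    calc ‖EA - TT F‖ ≤ ε/2 := hF
      _ < ε := by linarith
  exact isClosed_setOf_isCompactOperator.closure_subset hmem
end

section
/- If A = ⟨·, x⟩x is a rank-one positive operator on H and {E_z : z ∈ σ_pp(U)} the eigenprojections of a unitary U, then ℰ(A) = ∑_{z ∈ σ_pp(U)} ⟨·, E_z x⟩ E_z x; moreover only countably many terms are nonzero, and the partial sums converge in operator norm, so ℰ(A) is compact. -/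
open Filter Finset
open scoped InnerProductSpace

lemma rankOne_isCompactOperator {H : Type*} [NormedAddCommGroup H] [NormedSpace ℂ H]
    (c : H →L[ℂ] ℂ) (v : H) : IsCompactOperator (c.smulRight v) := by
  refine ⟨(fun a : ℂ => a • v) '' Metric.closedBall 0 ‖c‖,
    ((isCompact_closedBall 0 ‖c‖).image (by continuity)), ?_⟩
  refine Filter.mem_of_superset (Metric.closedBall_mem_nhds 0 one_pos) ?_
  intro y hy
  refine ⟨c y, ?_, rfl⟩
  simp only [Metric.mem_closedBall, dist_zero_right] at *
  calc ‖c y‖ ≤ ‖c‖ * ‖y‖ := c.le_opNorm y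
    _ ≤ ‖c‖ * 1 := by gcongr
    _ = ‖c‖ := mul_one _

/-- For the rank-one positive operator `A = ⟨·, x⟩x` one has
`ℰ(A) = ∑_{z ∈ σ_pp(U)} ⟨·, E_z x⟩ E_z x`; only countably many terms are nonzero, the partial
sums converge in operator norm, and `ℰ(A)` is compact. -/
theorem eigen_compression_rank_one
    {H : Type*} [NormedAddCommGroup H] [InnerProductSpace ℂ H] [CompleteSpace H]
    (U : unitary (H →L[ℂ] H)) (E : ℂ → (H →L[ℂ] H))
    (hE : ∀ z : ℂ, ∀ x : H,
      E z x ∈ LinearMap.ker (((U : H →L[ℂ] H) - z • (1 : H →L[ℂ] H) : H →L[ℂ] H) : H →ₗ[ℂ] H) ∧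
      x - E z x ∈ (LinearMap.ker (((U : H →L[ℂ] H) - z • (1 : H →L[ℂ] H) : H →L[ℂ] H) : H →ₗ[ℂ] H))ᗮ)
    (x : H) (A : H →L[ℂ] H) (hA : ∀ y : H, A y = ⟪x, y⟫_ℂ • x)
    (EA : H →L[ℂ] H)
    (hEA : ∀ y : H,
      Tendsto
        (fun F : Finset {z : ℂ // ∃ v : H, v ≠ 0 ∧ (U : H →L[ℂ] H) v = z • v} =>
          ∑ z ∈ F, E (z : ℂ) (A (E (z : ℂ) y)))
        atTop (nhds (EA y))) :
    (∀ y : H,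
      Tendsto
        (fun F : Finset {z : ℂ // ∃ v : H, v ≠ 0 ∧ (U : H →L[ℂ] H) v = z • v} =>
          ∑ z ∈ F, ⟪E (z : ℂ) x, y⟫_ℂ • E (z : ℂ) x)
        atTop (nhds (EA y))) ∧
    {z : ℂ | (∃ v : H, v ≠ 0 ∧ (U : H →L[ℂ] H) v = z • v) ∧ E z x ≠ 0}.Countable ∧
    Tendsto
      (fun F : Finset {z : ℂ // ∃ v : H, v ≠ 0 ∧ (U : H →L[ℂ] H) v = z • v} =>
        ∑ z ∈ F, (innerSL ℂ (E (z : ℂ) x)).smulRight (E (z : ℂ) x))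
      atTop (nhds EA) ∧
    IsCompactOperator EA := by
  classical
  set ι := {z : ℂ // ∃ v : H, v ≠ 0 ∧ (U : H →L[ℂ] H) v = z • v} with hι
  -- membership in the kernel means being an eigenvector
  have hker : ∀ (z : ℂ) (v : H),
      v ∈ LinearMap.ker (((U : H →L[ℂ] H) - z • (1 : H →L[ℂ] H) : H →L[ℂ] H) : H →ₗ[ℂ] H) ↔
        (U : H →L[ℂ] H) v = z • v := by
    intro z v
    simp [LinearMap.mem_ker, ContinuousLinearMap.sub_apply, ContinuousLinearMap.smul_apply,
      ContinuousLinearMap.one_apply, sub_eq_zero]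
  have hEz : ∀ (z : ℂ) (a : H), (U : H →L[ℂ] H) (E z a) = z • E z a :=
    fun z a => (hker z (E z a)).mp (hE z a).1
  -- E z is the orthogonal projection: key inner product identity
  have hproj : ∀ (z : ℂ) (a b : H), ⟪E z a, b⟫_ℂ = ⟪E z a, E z b⟫_ℂ := by
    intro z a b
    have h0 : ⟪E z a, b - E z b⟫_ℂ = 0 :=
      (Submodule.mem_orthogonal _ _).mp (hE z b).2 (E z a) (hE z a).1
    rw [inner_sub_right, sub_eq_zero] at h0
    exact h0
  -- unit modulus of eigenvalues
  have hmod : ∀ z : ι, (starRingEnd ℂ) (z : ℂ) * (z : ℂ) = 1 := by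
    rintro ⟨z, v, hv0, hvU⟩
    have h1 : ⟪(U : H →L[ℂ] H) v, (U : H →L[ℂ] H) v⟫_ℂ = ⟪v, v⟫_ℂ :=
      Unitary.inner_map_map U v v
    rw [hvU, inner_smul_left, inner_smul_right] at h1
    have hv : ⟪v, v⟫_ℂ ≠ 0 := inner_self_ne_zero.mpr hv0
    have := sub_eq_zero.mpr h1
    rw [show (starRingEnd ℂ) z * (z * ⟪v, v⟫_ℂ) - ⟪v, v⟫_ℂ
        = ((starRingEnd ℂ) z * z - 1) * ⟪v, v⟫_ℂ by ring] at this
    rcases mul_eq_zero.mp this with h | h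
    · exact sub_eq_zero.mp h
    · exact absurd h hv
  -- orthogonality of eigenvectors for distinct eigenvalues
  have horth : ∀ z w : ι, z ≠ w → ⟪E (z : ℂ) x, E (w : ℂ) x⟫_ℂ = 0 := by
    intro z w hzw
    by_contra hne
    have h1 : ⟪(U : H →L[ℂ] H) (E (z : ℂ) x), (U : H →L[ℂ] H) (E (w : ℂ) x)⟫_ℂ
        = ⟪E (z : ℂ) x, E (w : ℂ) x⟫_ℂ := Unitary.inner_map_map U _ _
    rw [hEz, hEz, inner_smul_left, inner_smul_right] at h1
    have h2 : ((starRingEnd ℂ) (z : ℂ) * (w : ℂ) - 1) * ⟪E (z : ℂ) x, E (w : ℂ) x⟫_ℂ = 0 := by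
      rw [sub_mul, one_mul, sub_eq_zero]; linear_combination h1
    have h3 : (starRingEnd ℂ) (z : ℂ) * (w : ℂ) = 1 := by
      rcases mul_eq_zero.mp h2 with h | h
      · exact sub_eq_zero.mp h
      · exact absurd h hne
    have hz := hmod z
    have hcz : (starRingEnd ℂ) (z : ℂ) ≠ 0 := by
      intro h; rw [h, zero_mul] at hz; exact zero_ne_one hz
    have : (w : ℂ) = (z : ℂ) := by
      have := h3.trans hz.symm
      exact mul_left_cancel₀ hcz this
    exact hzw (Subtype.ext this.symm)
  -- the summand identity
  have hsummand : ∀ (z : ℂ) (y : H), E z (A (E z y)) = ⟪E z x, y⟫_ℂ • E z x := by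
    intro z y
    have hxy : ⟪x, E z y⟫_ℂ = ⟪E z x, y⟫_ℂ := by
      have h1 : ⟪E z y, x⟫_ℂ = ⟪E z y, E z x⟫_ℂ := hproj z y x
      have h2 : ⟪E z x, y⟫_ℂ = ⟪E z x, E z y⟫_ℂ := hproj z x y
      calc ⟪x, E z y⟫_ℂ = (starRingEnd ℂ) ⟪E z y, x⟫_ℂ := (inner_conj_symm _ _).symm
        _ = (starRingEnd ℂ) ⟪E z y, E z x⟫_ℂ := by rw [h1]
        _ = ⟪E z x, E z y⟫_ℂ := inner_conj_symm _ _
        _ = ⟪E z x, y⟫_ℂ := h2.symm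
    rw [hA, map_smul, hxy]
  -- Part 1
  have part1 : ∀ y : H,
      Tendsto (fun F : Finset ι => ∑ z ∈ F, ⟪E (z : ℂ) x, y⟫_ℂ • E (z : ℂ) x)
        atTop (nhds (EA y)) := by
    intro y
    have := hEA y
    simpa only [hsummand] using this
  -- norms of projections of x
  have hinner_self : ∀ z : ℂ, ⟪x, E z x⟫_ℂ = (‖E z x‖ : ℂ) ^ 2 := by
    intro z
    have h1 : ⟪E z x, x⟫_ℂ = ⟪E z x, E z x⟫_ℂ := hproj z x x
    calc ⟪x, E z x⟫_ℂ = (starRingEnd ℂ) ⟪E z x, x⟫_ℂ := (inner_conj_symm _ _).symm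
      _ = (starRingEnd ℂ) ⟪E z x, E z x⟫_ℂ := by rw [h1]
      _ = ⟪E z x, E z x⟫_ℂ := inner_conj_symm _ _
      _ = (‖E z x‖ : ℂ) ^ 2 := by rw [inner_self_eq_norm_sq_to_K]; norm_cast
  -- Bessel inequality for finite sums
  have hbessel : ∀ F : Finset ι, ∑ z ∈ F, ‖E (z : ℂ) x‖ ^ 2 ≤ ‖x‖ ^ 2 := by
    intro F
    set s : H := ∑ z ∈ F, E (z : ℂ) x with hs
    have hss : ⟪s, s⟫_ℂ = ∑ z ∈ F, (‖E (z : ℂ) x‖ : ℂ) ^ 2 := by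
      rw [hs, inner_sum]
      refine Finset.sum_congr rfl fun w hw => ?_
      rw [sum_inner, Finset.sum_eq_single w]
      · rw [inner_self_eq_norm_sq_to_K]; norm_cast
      · intro z hz hzw; exact horth z w hzw
      · intro h; exact absurd hw h
    have hxs : ⟪x, s⟫_ℂ = ∑ z ∈ F, (‖E (z : ℂ) x‖ : ℂ) ^ 2 := by
      rw [hs, inner_sum]
      exact Finset.sum_congr rfl fun w _ => hinner_self w
    have hnn : (0 : ℝ) ≤ ‖x - s‖ ^ 2 := sq_nonneg _
    have hexp : ‖x - s‖ ^ 2 = ‖x‖ ^ 2 - 2 * Complex.re ⟪x, s⟫_ℂ + ‖s‖ ^ 2 := by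
      exact norm_sub_sq (𝕜 := ℂ) x s
    have hre : Complex.re ⟪x, s⟫_ℂ = ∑ z ∈ F, ‖E (z : ℂ) x‖ ^ 2 := by
      rw [hxs, Complex.re_sum]
      simp only [← Complex.ofReal_pow, Complex.ofReal_re]
    have hsnorm : ‖s‖ ^ 2 = ∑ z ∈ F, ‖E (z : ℂ) x‖ ^ 2 := by
      have h := congrArg Complex.re hss
      rw [Complex.re_sum] at h
      simp only [← Complex.ofReal_pow, Complex.ofReal_re] at h
      rw [← h]
      exact (inner_self_eq_norm_sq (𝕜 := ℂ) s).symm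
    nlinarith [hnn, hexp, hre, hsnorm]
  have hnonneg : ∀ z : ι, (0 : ℝ) ≤ ‖E (z : ℂ) x‖ ^ 2 := fun z => sq_nonneg _
  have hsummable : Summable (fun z : ι => ‖E (z : ℂ) x‖ ^ 2) :=
    summable_of_sum_le hnonneg hbessel
  -- Part 2: countability
  have part2 : {z : ℂ | (∃ v : H, v ≠ 0 ∧ (U : H →L[ℂ] H) v = z • v) ∧ E z x ≠ 0}.Countable := by
    have hsupp : (Function.support fun z : ι => ‖E (z : ℂ) x‖ ^ 2).Countable :=
      hsummable.countable_support
    have him : {z : ℂ | (∃ v : H, v ≠ 0 ∧ (U : H →L[ℂ] H) v = z • v) ∧ E z x ≠ 0}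
        = Subtype.val '' (Function.support fun z : ι => ‖E (z : ℂ) x‖ ^ 2) := by
      ext z
      simp only [Set.mem_setOf_eq, Set.mem_image, Function.mem_support]
      constructor
      · rintro ⟨hP, hne⟩
        exact ⟨⟨z, hP⟩, by simpa using hne, rfl⟩
      · rintro ⟨⟨w, hw⟩, hne, rfl⟩
        exact ⟨hw, by simpa using hne⟩
    rw [him]
    exact hsupp.image _
  -- Part 3: operator-norm convergence
  set g : ι → (H →L[ℂ] H) :=
    fun z => (innerSL ℂ (E (z : ℂ) x)).smulRight (E (z : ℂ) x) with hg
  have hgnorm : ∀ z : ι, ‖g z‖ = ‖E (z : ℂ) x‖ ^ 2 := by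
    intro z
    rw [hg]
    simp only
    rw [ContinuousLinearMap.norm_smulRight_apply, innerSL_apply_norm, sq]
  have hgsummable : Summable g := by
    refine Summable.of_norm ?_
    exact hsummable.congr fun z => (hgnorm z).symm
  obtain ⟨T, hT⟩ := hgsummable
  have hTapply : ∀ y : H, Tendsto (fun F : Finset ι => ∑ z ∈ F, ⟪E (z : ℂ) x, y⟫_ℂ • E (z : ℂ) x)
      atTop (nhds (T y)) := by
    intro y
    have := hT.mapL (ContinuousLinearMap.apply ℂ H y)
    simpa [HasSum, g, ContinuousLinearMap.smulRight_apply] using this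
  have hTEA : T = EA := by
    ext y
    exact tendsto_nhds_unique (hTapply y) (part1 y)
  rw [hTEA] at hT
  refine ⟨part1, part2, hT, ?_⟩
  -- Part 4: compactness
  refine isCompactOperator_of_tendsto hT (Eventually.of_forall fun F => ?_)
  have : ∀ F : Finset ι, IsCompactOperator (⇑(∑ z ∈ F, g z)) := by
    intro F
    induction F using Finset.induction_on with
    | empty => simpa using isCompactOperator_zero
    | insert z F' hzF ih =>
      rw [Finset.sum_insert hzF]
      have h1 : IsCompactOperator (⇑(g z)) := rankOne_isCompactOperator _ _
      have := h1.add ih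
      simpa [ContinuousLinearMap.coe_add'] using this
  exact this F
end
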